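/- arXiv:2405.16639 — 4 statements merged into one kernel-verified Lean document; each statement's English description precedes it below -/
import Mathlib

section
/- Let Ω ⊆ ℝ^K be compact convex with ℓ∞-diameter at most d_Ω, φ: Ω → ℝ strictly convex and continuously differentiable with each coordinate (∇φ)_ℓ being L_g-Lipschitz on the relevant range, and D a distribution on Δ × Ω whose marginal D_X on ℝ^d satisfies c-isoperimetry. Fix an L-Lipschitz measurable f: Δ → Ω, let (X_i, Y_i)_{i=1}^n be i.i.d. samples from D, and set Γ₃^{(i)}(f) := −⟨Y_i − E[Y_i|X_i], ∇φ(f(X_i)) − E[∇φ(f(X))]⟩. Then for every ε > 0, Pr[(1/n)Σ_{i=1}^n Γ₃^{(i)}(f) ≤ −ε] ≤ K·exp(−ndε² / (2cC²K²d_Ω²L²L_g²)), where C is the universal constant such that a product of a bounded uncorrelated factor |Z| ≤ M with a mean-zero σ-sub-Gaussian variable is CMσ-sub-Gaussian. -/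
open MeasureTheory ProbabilityTheory Real
open scoped ENNReal RealInnerProductSpace

noncomputable section

/-- `ℝ^m` with the Euclidean structure. -/
abbrev Euc (m : ℕ) : Type := EuclideanSpace ℝ (Fin m)

/-- The Bregman divergence `D_φ(x, y) = φ x - φ y - ⟪∇φ y, x - y⟫`. -/
def breg {m : ℕ} (φ : Euc m → ℝ) (x y : Euc m) : ℝ :=
  φ x - φ y - ⟪gradient φ y, x - y⟫

/-- A real random variable `X` is sub-Gaussian with parameter `σ` under `μ`:
`E[exp (l (X - E X))] ≤ exp (l² σ² / 2)` for all real `l`. -/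
def SubGaussianPar {α : Type*} [MeasurableSpace α] (μ : Measure α) (X : α → ℝ) (σ : ℝ) : Prop :=
  ∀ l : ℝ, ∫ a, Real.exp (l * (X a - ∫ a', X a' ∂μ)) ∂μ ≤ Real.exp (l ^ 2 * σ ^ 2 / 2)

/-- A distribution on `ℝ^d` satisfies `c`-isoperimetry: every `L`-Lipschitz real-valued
function of the sample is sub-Gaussian with parameter `L √(c/d)`. -/
def Isoperimetric (c : ℝ) (d : ℕ) (μ : Measure (Euc d)) : Prop :=
  ∀ (L : ℝ) (f : Euc d → ℝ), 0 ≤ L → LipschitzWith (Real.toNNReal L) f →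
    SubGaussianPar μ f (L * Real.sqrt (c / d))

/-- `C` is a universal constant such that the product of a bounded uncorrelated factor
`|Z| ≤ M` with a mean-zero `σ`-sub-Gaussian variable is `C·M·σ`-sub-Gaussian. -/
def MultConstGood (C : ℝ) : Prop :=
  0 < C ∧ ∀ (α : Type) [MeasurableSpace α] (μ : Measure α), IsProbabilityMeasure μ →
    ∀ (X Z : α → ℝ) (σ M : ℝ), Measurable X → Measurable Z →
      SubGaussianPar μ X σ → (∫ a, X a ∂μ) = 0 → (∫ a, Z a * X a ∂μ) = 0 →
      (∀ᵐ a ∂μ, |Z a| ≤ M) → SubGaussianPar μ (fun a => Z a * X a) (C * M * σ)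

lemma condexp_clm_comm {α : Type*} {m m0 : MeasurableSpace α} (hm : m ≤ m0)
    {μ : Measure α} [IsFiniteMeasure μ]
    {E F : Type*} [NormedAddCommGroup E] [NormedSpace ℝ E] [CompleteSpace E]
    [NormedAddCommGroup F] [NormedSpace ℝ F] [CompleteSpace F]
    (T : E →L[ℝ] F) {f : α → E} (hf : Integrable f μ) :
    (fun a => T ((μ[f|m]) a)) =ᵐ[μ] μ[fun a => T (f a)|m] := by
  refine ae_eq_condExp_of_forall_setIntegral_eq hm (T.integrable_comp hf)
    (fun s hs hμs => (T.integrable_comp integrable_condExp).integrableOn)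
    (fun s hs hμs => ?_) ?_
  · rw [T.integral_comp_comm integrable_condExp.integrableOn,
      T.integral_comp_comm hf.integrableOn, setIntegral_condExp hm hf hs]
  · exact StronglyMeasurable.aestronglyMeasurable
      (T.continuous.comp_stronglyMeasurable stronglyMeasurable_condExp)

lemma subGaussianPar_map {α β : Type*} [MeasurableSpace α] [MeasurableSpace β]
    {μ : Measure α} {F : α → β} (hF : Measurable F) {h : β → ℝ} (hh : Measurable h)
    {σ : ℝ} (hs : SubGaussianPar (μ.map F) h σ) :
    SubGaussianPar μ (fun a => h (F a)) σ := by
  intro l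
  have h1 : ∫ x, h x ∂(μ.map F) = ∫ a, h (F a) ∂μ :=
    integral_map hF.aemeasurable hh.aestronglyMeasurable
  have h2 := hs l
  rwa [h1, integral_map hF.aemeasurable
    (((hh.sub_const _).const_mul l).exp.aestronglyMeasurable)] at h2

lemma chernoff_pi {α : Type*} [MeasurableSpace α] (μ : Measure α) [IsProbabilityMeasure μ]
    (W : α → ℝ) (hW : Measurable W) (B : ℝ) (hB : ∀ᵐ a ∂μ, |W a| ≤ B)
    (σ : ℝ) (hσ : 0 < σ) (hmgf : ∀ l : ℝ, ∫ a, Real.exp (l * W a) ∂μ ≤ Real.exp (l ^ 2 * σ ^ 2 / 2))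
    (n : ℕ) (hn : 0 < n) (t : ℝ) (ht : 0 < t) :
    (Measure.pi fun _ : Fin n => μ) {ω | t ≤ ∑ i, W (ω i)} ≤
      ENNReal.ofReal (Real.exp (-(t ^ 2) / (2 * n * σ ^ 2))) := by
  letI : MeasureSpace α := ⟨μ⟩
  have hpi : (Measure.pi fun _ : Fin n => μ) = (volume : Measure (Fin n → α)) := rfl
  set l : ℝ := t / (n * σ ^ 2) with hl
  have hnσ : (0:ℝ) < n * σ ^ 2 := by positivity
  have hlpos : 0 < l := div_pos ht hnσ
  have hWexp : ∀ (s : ℝ), Integrable (fun a => Real.exp (s * W a)) μ := by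
    intro s
    refine Integrable.mono' (integrable_const (Real.exp (|s| * B)))
      ((hW.const_mul s).exp.aestronglyMeasurable) ?_
    filter_upwards [hB] with a ha
    rw [Real.norm_eq_abs, abs_of_pos (Real.exp_pos _), Real.exp_le_exp]
    calc s * W a ≤ |s * W a| := le_abs_self _
      _ = |s| * |W a| := abs_mul _ _
      _ ≤ |s| * B := mul_le_mul_of_nonneg_left ha (abs_nonneg s)
  have hint : Integrable (fun ω : Fin n → α => Real.exp (l * (∑ i, W (ω i)))) := by
    have := Integrable.fintype_prod (f := fun _ a => Real.exp (l * W a)) (fun _ : Fin n => hWexp l)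
    simp only [Finset.mul_sum, Real.exp_sum]; exact this
  have hch := measure_ge_le_exp_mul_mgf (X := fun ω : Fin n → α => ∑ i, W (ω i))
    (μ := volume) t hlpos.le hint
  have hmgf_prod : mgf (fun ω : Fin n → α => ∑ i, W (ω i)) volume l
      = ∏ _i : Fin n, ∫ a, Real.exp (l * W a) ∂μ := by
    rw [mgf]
    rw [show (fun ω : Fin n → α => Real.exp (l * ∑ i, W (ω i)))
        = fun ω : Fin n → α => ∏ i, Real.exp (l * W (ω i)) by
      funext ω; rw [Finset.mul_sum, Real.exp_sum]]
    exact integral_fintype_prod_eq_prod (ι := Fin n) (f := fun _ a => Real.exp (l * W a))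
  have hbound : mgf (fun ω : Fin n → α => ∑ i, W (ω i)) volume l
      ≤ Real.exp (l ^ 2 * σ ^ 2 / 2) ^ n := by
    rw [hmgf_prod]
    calc ∏ _i : Fin n, ∫ a, Real.exp (l * W a) ∂μ
        ≤ ∏ _i : Fin n, Real.exp (l ^ 2 * σ ^ 2 / 2) :=
          Finset.prod_le_prod (fun _ _ => integral_nonneg fun a => (Real.exp_pos _).le)
            (fun _ _ => hmgf l)
      _ = Real.exp (l ^ 2 * σ ^ 2 / 2) ^ n := by simp
  have key : Real.exp (-l * t) * Real.exp (l ^ 2 * σ ^ 2 / 2) ^ n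
      = Real.exp (-(t ^ 2) / (2 * n * σ ^ 2)) := by
    rw [← Real.exp_nat_mul, ← Real.exp_add]
    congr 1
    rw [hl]
    field_simp
    ring
  have hfin : (volume : Measure (Fin n → α)) {ω | t ≤ ∑ i, W (ω i)} ≠ ⊤ := by
    haveI : IsProbabilityMeasure (volume : Measure (Fin n → α)) := by
      rw [← hpi]; infer_instance
    exact measure_ne_top _ _
  rw [hpi, ← ENNReal.ofReal_toReal hfin]
  apply ENNReal.ofReal_le_ofReal
  calc (volume {ω : Fin n → α | t ≤ ∑ i, W (ω i)}).toReal
      ≤ Real.exp (-l * t) * mgf (fun ω : Fin n → α => ∑ i, W (ω i)) volume l := hch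
    _ ≤ Real.exp (-l * t) * Real.exp (l ^ 2 * σ ^ 2 / 2) ^ n :=
        mul_le_mul_of_nonneg_left hbound (Real.exp_pos _).le
    _ = _ := key

/-- **Concentration of the `Γ₃` terms for a fixed Lipschitz `f`** under a `c`-isoperimetric
covariate distribution: the empirical average of
`Γ₃⁽ⁱ⁾(f) = −⟨Yᵢ − E[Yᵢ|Xᵢ], ∇φ(f(Xᵢ)) − E[∇φ(f(X))]⟩` is at least `−ε` except with
probability `K exp(−ndε²/(2cC²K²d_Ω²L²L_g²))`. -/
theorem Gamma3_concentration (d K : ℕ) (Δ : Set (Euc d)) (Ω : Set (Euc K))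
    (hΩconv : Convex ℝ Ω) (hΩc : IsCompact Ω)
    (dΩ : ℝ) (hdΩ : ∀ x ∈ Ω, ∀ y ∈ Ω, ∀ ℓ : Fin K, |x ℓ - y ℓ| ≤ dΩ)
    (φ : Euc K → ℝ) (hφ : StrictConvexOn ℝ Ω φ) (hφd : ContDiff ℝ 1 φ)
    (D : Measure (Euc d × Euc K)) [IsProbabilityMeasure D]
    (hsupp : ∀ᵐ q ∂D, q.1 ∈ Δ ∧ q.2 ∈ Ω)
    (c : ℝ) (hc : 0 < c) (hiso : Isoperimetric c d (D.map Prod.fst))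
    (η : Euc d → Euc K) (hη : Measurable η) (hηΩ : ∀ x, η x ∈ Ω)
    (hver : (fun q : Euc d × Euc K => η q.1) =ᵐ[D]
      D[(fun q : Euc d × Euc K => q.2) | MeasurableSpace.comap Prod.fst inferInstance])
    (C : ℝ) (hC : MultConstGood C)
    (L Lg : ℝ) (hL : 0 ≤ L)
    (f : Euc d → Euc K) (hf : Measurable f) (hfΩ : ∀ x, f x ∈ Ω)
    (hflip : LipschitzWith (Real.toNNReal L) f)
    (hLg : ∀ ℓ : Fin K, LipschitzOnWith (Real.toNNReal Lg)
      (fun y => gradient φ y ℓ) (Set.range f))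
    (n : ℕ) (ε : ℝ) (hε : 0 < ε) :
    (Measure.pi fun _ : Fin n => D)
        {ω | (1 / (n : ℝ)) * ∑ i,
            -⟪(ω i).2 - η ((ω i).1),
              gradient φ (f ((ω i).1)) - ∫ q, gradient φ (f q.1) ∂D⟫ ≤ -ε} ≤
      ENNReal.ofReal (K * Real.exp
        (-(n * d * ε ^ 2) / (2 * c * C ^ 2 * K ^ 2 * dΩ ^ 2 * L ^ 2 * Lg ^ 2))) := by
  -- trivial case: n = 0
  rcases Nat.eq_zero_or_pos n with hn0 | hn
  · haveI : IsEmpty (Fin n) := by rw [hn0]; infer_instance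
    have hemp : {ω : Fin n → Euc d × Euc K | (1 / (n : ℝ)) * ∑ i,
        -⟪(ω i).2 - η ((ω i).1),
          gradient φ (f ((ω i).1)) - ∫ q, gradient φ (f q.1) ∂D⟫ ≤ -ε} = ∅ := by
      ext ω; simp only [Set.mem_setOf_eq, Set.mem_empty_iff_false, iff_false, not_le,
        Finset.univ_eq_empty, Finset.sum_empty, mul_zero]
      linarith
    rw [hemp]; simp
  -- trivial case: K = 0
  rcases Nat.eq_zero_or_pos K with hK0 | hK
  · haveI : IsEmpty (Fin K) := by rw [hK0]; infer_instance
    have hemp : {ω : Fin n → Euc d × Euc K | (1 / (n : ℝ)) * ∑ i,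
        -⟪(ω i).2 - η ((ω i).1),
          gradient φ (f ((ω i).1)) - ∫ q, gradient φ (f q.1) ∂D⟫ ≤ -ε} = ∅ := by
      ext ω; simp only [Set.mem_setOf_eq, Set.mem_empty_iff_false, iff_false, not_le]
      have hz : ∀ i : Fin n, ⟪(ω i).2 - η ((ω i).1),
          gradient φ (f ((ω i).1)) - ∫ q, gradient φ (f q.1) ∂D⟫ = (0:ℝ) := by
        intro i; rw [PiLp.inner_apply]; simp
      simp only [hz, neg_zero, Finset.sum_const, smul_zero, mul_zero]
      linarith
    rw [hemp]; simp
  -- now n > 0 and K > 0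
  haveI : Nonempty (Fin K) := Fin.pos_iff_nonempty.mp hK
  have hK1 : (1:ℝ) ≤ K := by exact_mod_cast hK
  by_cases htriv : dΩ = 0 ∨ L = 0 ∨ Lg = 0 ∨ d = 0
  · have hexp : (-((n:ℝ) * d * ε ^ 2) / (2 * c * C ^ 2 * K ^ 2 * dΩ ^ 2 * L ^ 2 * Lg ^ 2)) = 0 := by
      rcases htriv with h|h|h|h <;> simp [h]
    rw [hexp, Real.exp_zero, mul_one]
    calc (Measure.pi fun _ : Fin n => D) _ ≤ 1 := prob_le_one
      _ ≤ ENNReal.ofReal K := by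
          rw [← ENNReal.ofReal_one]; exact ENNReal.ofReal_le_ofReal hK1
  push_neg at htriv
  obtain ⟨hdΩne, hLne, hLgne, hdne⟩ := htriv
  have hd : 0 < d := Nat.pos_of_ne_zero hdne
  have hdpos : (0:ℝ) < d := by exact_mod_cast hd
  have hnpos : (0:ℝ) < n := by exact_mod_cast hn
  have hKpos : (0:ℝ) < K := by exact_mod_cast hK
  have hdΩ0 : 0 ≤ dΩ := by
    have := hdΩ (f 0) (hfΩ 0) (f 0) (hfΩ 0) ⟨0, hK⟩
    simpa using this
  have hdΩpos : 0 < dΩ := lt_of_le_of_ne hdΩ0 (Ne.symm hdΩne)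
  have hLpos : 0 < L := lt_of_le_of_ne hL (Ne.symm hLne)
  have hLgpos : 0 < |Lg| := abs_pos.mpr hLgne
  have hCpos : 0 < C := hC.1
  -- continuity of the gradient
  have hgradcont : Continuous (gradient φ) := by
    show Continuous fun y => (InnerProductSpace.toDual ℝ _).symm (fderiv ℝ φ y)
    exact (InnerProductSpace.toDual ℝ _).symm.continuous.comp (hφd.continuous_fderiv one_ne_zero)
  have hcoord : ∀ ℓ : Fin K, Measurable (fun v : Euc K => v ℓ) := fun ℓ =>
    (EuclideanSpace.proj (𝕜 := ℝ) ℓ).continuous.measurable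
  have hcoord_le : ∀ (v : Euc K) (ℓ : Fin K), |v ℓ| ≤ ‖v‖ := by
    intro v ℓ
    rw [EuclideanSpace.norm_eq, ← Real.sqrt_sq_eq_abs]
    apply Real.sqrt_le_sqrt
    have : |v ℓ| ^ 2 = ‖v ℓ‖ ^ 2 := by rw [Real.norm_eq_abs]
    calc (v ℓ) ^ 2 = ‖v ℓ‖ ^ 2 := by rw [Real.norm_eq_abs, sq_abs]
      _ ≤ ∑ i, ‖v i‖ ^ 2 :=
          Finset.single_le_sum (f := fun i => ‖v i‖ ^ 2)
            (fun i _ => sq_nonneg _) (Finset.mem_univ ℓ)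
  -- bounds and integrability
  obtain ⟨Mg, hMg⟩ := hΩc.exists_bound_of_continuousOn hgradcont.continuousOn
  have hGmeas : Measurable (fun x : Euc d => gradient φ (f x)) :=
    hgradcont.measurable.comp hf
  have hGint : Integrable (fun q : Euc d × Euc K => gradient φ (f q.1)) D :=
    Integrable.mono' (integrable_const Mg) (hGmeas.comp measurable_fst).aestronglyMeasurable
      (Filter.Eventually.of_forall fun q => hMg _ (hfΩ q.1))
  obtain ⟨RΩ, hRΩ⟩ := hΩc.exists_bound_of_continuousOn continuous_id.continuousOn
  have hYint : Integrable (fun q : Euc d × Euc K => q.2) D := by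
    refine Integrable.mono' (integrable_const RΩ) measurable_snd.aestronglyMeasurable ?_
    filter_upwards [hsupp] with q hq using hRΩ _ hq.2
  set m0 : Euc K := ∫ q, gradient φ (f q.1) ∂D with hm0def
  set h : Fin K → Euc d → ℝ := fun ℓ x => gradient φ (f x) ℓ - m0 ℓ with hhdef
  set W : Fin K → Euc d × Euc K → ℝ := fun ℓ q => (q.2 ℓ - η q.1 ℓ) * h ℓ q.1 with hWdef
  have hhm : ∀ ℓ, Measurable (h ℓ) := fun ℓ =>
    ((hcoord ℓ).comp hGmeas).sub measurable_const
  have hmℓ : ∀ ℓ : Fin K, m0 ℓ = ∫ q, gradient φ (f q.1) ℓ ∂D := fun ℓ =>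
    ((EuclideanSpace.proj (𝕜 := ℝ) ℓ).integral_comp_comm hGint).symm
  have hGℓint : ∀ ℓ : Fin K, Integrable (fun q : Euc d × Euc K => gradient φ (f q.1) ℓ) D :=
    fun ℓ => (EuclideanSpace.proj (𝕜 := ℝ) ℓ).integrable_comp hGint
  have hcent : ∀ ℓ : Fin K, ∫ q, h ℓ q.1 ∂D = 0 := by
    intro ℓ
    have : (fun q : Euc d × Euc K => h ℓ q.1)
        = fun q => gradient φ (f q.1) ℓ - m0 ℓ := rfl
    rw [this, integral_sub (hGℓint ℓ) (integrable_const _), integral_const, probReal_univ,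
      one_smul, ← hmℓ ℓ, sub_self]
  -- Lipschitz property of h ℓ
  have hliph : ∀ ℓ, LipschitzWith ((L * |Lg|).toNNReal) (h ℓ) := by
    intro ℓ
    have h1 : LipschitzOnWith (Real.toNNReal |Lg|) (fun y => gradient φ y ℓ) (Set.range f) :=
      fun x hx y hy => le_trans (hLg ℓ hx hy)
        (mul_le_mul_left (ENNReal.coe_le_coe.2 (Real.toNNReal_mono (le_abs_self _))) _)
    have h2 : LipschitzWith (Real.toNNReal |Lg| * Real.toNNReal L)
        (fun x => gradient φ (f x) ℓ) := by
      rw [← lipschitzOnWith_univ]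
      exact h1.comp hflip.lipschitzOnWith (fun x _ => Set.mem_range_self x)
    have h3 : Real.toNNReal |Lg| * Real.toNNReal L = (L * |Lg|).toNNReal := by
      rw [Real.toNNReal_mul hL, mul_comm]
    rw [h3] at h2
    refine LipschitzWith.of_dist_le_mul fun x y => ?_
    have := h2.dist_le_mul x y
    calc dist (h ℓ x) (h ℓ y)
        = dist (gradient φ (f x) ℓ) (gradient φ (f y) ℓ) := dist_sub_right _ _ _
      _ ≤ ((L * |Lg|).toNNReal : ℝ) * dist x y := this
  -- sub-Gaussianity of h ℓ ∘ fst
  have hLLg0 : 0 ≤ L * |Lg| := by positivity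
  have hsubG : ∀ ℓ : Fin K, SubGaussianPar D (fun q : Euc d × Euc K => h ℓ q.1)
      ((L * |Lg|) * Real.sqrt (c / d)) := fun ℓ =>
    subGaussianPar_map measurable_fst (hhm ℓ) (hiso (L * |Lg|) (h ℓ) hLLg0 (hliph ℓ))
  -- measurability and boundedness of Z
  have hZmeas : ∀ ℓ : Fin K, Measurable (fun q : Euc d × Euc K => q.2 ℓ - η q.1 ℓ) := fun ℓ =>
    ((hcoord ℓ).comp measurable_snd).sub ((hcoord ℓ).comp (hη.comp measurable_fst))
  have hZbdd : ∀ ℓ : Fin K, ∀ᵐ q ∂D, |q.2 ℓ - η q.1 ℓ| ≤ dΩ := by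
    intro ℓ
    filter_upwards [hsupp] with q hq using hdΩ _ hq.2 _ (hηΩ q.1) ℓ
  -- bound on h ℓ
  have hbddh : ∀ (ℓ : Fin K) (x : Euc d), |h ℓ x| ≤ Mg + ‖m0‖ := by
    intro ℓ x
    have h1 : |gradient φ (f x) ℓ| ≤ Mg := (hcoord_le _ ℓ).trans (hMg _ (hfΩ x))
    have h2 : |m0 ℓ| ≤ ‖m0‖ := hcoord_le _ ℓ
    calc |h ℓ x| ≤ |gradient φ (f x) ℓ| + |m0 ℓ| := abs_sub _ _
      _ ≤ Mg + ‖m0‖ := add_le_add h1 h2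
  -- the conditional-expectation (uncorrelatedness) step
  have hm'le : (MeasurableSpace.comap (Prod.fst : Euc d × Euc K → Euc d) inferInstance) ≤
      (inferInstance : MeasurableSpace (Euc d × Euc K)) := measurable_fst.comap_le
  have hverℓ : ∀ ℓ : Fin K, (fun q : Euc d × Euc K => η q.1 ℓ) =ᵐ[D]
      D[fun q : Euc d × Euc K => q.2 ℓ | MeasurableSpace.comap Prod.fst inferInstance] := by
    intro ℓ
    have e1 := hver.fun_comp (EuclideanSpace.proj (𝕜 := ℝ) ℓ)
    have e2 := condexp_clm_comm hm'le (EuclideanSpace.proj (𝕜 := ℝ) ℓ) hYint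
    exact e1.trans e2
  have huncor : ∀ ℓ : Fin K, ∫ q, W ℓ q ∂D = 0 := by
    intro ℓ
    have hfstm' : Measurable[MeasurableSpace.comap (Prod.fst : Euc d × Euc K → Euc d)
        inferInstance] (Prod.fst : Euc d × Euc K → Euc d) := measurable_iff_comap_le.mpr le_rfl
    have hhsm : StronglyMeasurable[MeasurableSpace.comap (Prod.fst : Euc d × Euc K → Euc d)
        inferInstance] (fun q : Euc d × Euc K => h ℓ q.1) :=
      ((hhm ℓ).comp hfstm').stronglyMeasurable
    have hYℓint : Integrable (fun q : Euc d × Euc K => q.2 ℓ) D :=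
      (EuclideanSpace.proj (𝕜 := ℝ) ℓ).integrable_comp hYint
    have hmul1 : Integrable ((fun q : Euc d × Euc K => h ℓ q.1) * fun q => q.2 ℓ) D :=
      hYℓint.bdd_mul ((hhm ℓ).comp measurable_fst).aestronglyMeasurable
        (Filter.Eventually.of_forall fun q => hbddh ℓ q.1)
    have hmul1' : Integrable (fun q : Euc d × Euc K => h ℓ q.1 * q.2 ℓ) D := hmul1
    have hint2 : Integrable (fun q : Euc d × Euc K => h ℓ q.1 * η q.1 ℓ) D := by
      refine Integrable.mono' (integrable_const ((Mg + ‖m0‖) * RΩ))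
        (((hhm ℓ).comp measurable_fst).mul
          ((hcoord ℓ).comp (hη.comp measurable_fst))).aestronglyMeasurable ?_
      refine Filter.Eventually.of_forall fun q => ?_
      rw [Real.norm_eq_abs, abs_mul]
      have hb := hbddh ℓ q.1
      have h2 : |η q.1 ℓ| ≤ RΩ := (hcoord_le _ ℓ).trans (hRΩ _ (hηΩ q.1))
      exact mul_le_mul hb h2 (abs_nonneg _) (le_trans (abs_nonneg _) hb)
    have hpull := condExp_mul_of_stronglyMeasurable_left hhsm hmul1 hYℓint
    have e3 : ∫ q, h ℓ q.1 * q.2 ℓ ∂D = ∫ q, h ℓ q.1 * η q.1 ℓ ∂D := by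
      calc ∫ q, h ℓ q.1 * q.2 ℓ ∂D
          = ∫ q, (D[(fun q : Euc d × Euc K => h ℓ q.1) * fun q => q.2 ℓ|
              MeasurableSpace.comap Prod.fst inferInstance]) q ∂D :=
            (integral_condExp hm'le).symm
        _ = ∫ q, ((fun q : Euc d × Euc K => h ℓ q.1) *
              D[fun q : Euc d × Euc K => q.2 ℓ|
                MeasurableSpace.comap Prod.fst inferInstance]) q ∂D :=
            integral_congr_ae hpull
        _ = ∫ q, h ℓ q.1 * η q.1 ℓ ∂D := by
            refine integral_congr_ae ?_
            filter_upwards [hverℓ ℓ] with q hq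
            simp only [Pi.mul_apply]
            rw [← hq]
    have hW_eq : (fun q : Euc d × Euc K => W ℓ q)
        = fun q => h ℓ q.1 * q.2 ℓ - h ℓ q.1 * η q.1 ℓ := by
      funext q; simp only [hWdef]; ring
    rw [show ∫ q, W ℓ q ∂D = ∫ q, (h ℓ q.1 * q.2 ℓ - h ℓ q.1 * η q.1 ℓ) ∂D from by rw [hW_eq],
      integral_sub hmul1' hint2, e3, sub_self]
  -- apply the multiplication constant hypothesis
  set σ : ℝ := C * dΩ * ((L * |Lg|) * Real.sqrt (c / d)) with hσdef
  have hsqrtpos : 0 < Real.sqrt (c / d) := Real.sqrt_pos.mpr (div_pos hc hdpos)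
  have hσpos : 0 < σ := by rw [hσdef]; positivity
  have hWmeas : ∀ ℓ, Measurable (W ℓ) := fun ℓ =>
    (hZmeas ℓ).mul ((hhm ℓ).comp measurable_fst)
  have hCsub : ∀ ℓ : Fin K, SubGaussianPar D (W ℓ) σ := by
    intro ℓ
    have := hC.2 (Euc d × Euc K) D inferInstance (fun q => h ℓ q.1)
      (fun q => q.2 ℓ - η q.1 ℓ) ((L * |Lg|) * Real.sqrt (c / d)) dΩ
      ((hhm ℓ).comp measurable_fst) (hZmeas ℓ) (hsubG ℓ) (hcent ℓ) (huncor ℓ) (hZbdd ℓ)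
    exact this
  have hmgfℓ : ∀ (ℓ : Fin K) (l : ℝ),
      ∫ q, Real.exp (l * W ℓ q) ∂D ≤ Real.exp (l ^ 2 * σ ^ 2 / 2) := by
    intro ℓ l
    have h0 := hCsub ℓ l
    rw [show (∫ a', W ℓ a' ∂D) = 0 from huncor ℓ] at h0
    simpa using h0
  -- Chernoff bound for each coordinate
  have hmain : ∀ ℓ : Fin K,
      (Measure.pi fun _ : Fin n => D) {ω | (n : ℝ) * ε / K ≤ ∑ i, W ℓ (ω i)} ≤
        ENNReal.ofReal (Real.exp
          (-((n:ℝ) * d * ε ^ 2) / (2 * c * C ^ 2 * K ^ 2 * dΩ ^ 2 * L ^ 2 * Lg ^ 2))) := by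
    intro ℓ
    have htpos : 0 < (n : ℝ) * ε / K := by positivity
    have hch := chernoff_pi D (W ℓ) (hWmeas ℓ) (dΩ * (Mg + ‖m0‖)) ?_ σ hσpos
      (hmgfℓ ℓ) n hn ((n : ℝ) * ε / K) htpos
    · refine hch.trans (le_of_eq ?_)
      congr 1
      congr 1
      have hσsq : σ ^ 2 = C ^ 2 * dΩ ^ 2 * (L ^ 2 * Lg ^ 2) * (c / d) := by
        rw [hσdef, mul_pow, mul_pow, mul_pow, mul_pow,
          Real.sq_sqrt (le_of_lt (div_pos hc hdpos)), sq_abs]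
        ring
      rw [hσsq]
      field_simp
    · filter_upwards [hZbdd ℓ] with q hq
      rw [hWdef, abs_mul]
      exact mul_le_mul hq (hbddh ℓ q.1) (abs_nonneg _) hdΩ0
  -- union bound
  have hsubset : {ω : Fin n → Euc d × Euc K | (1 / (n : ℝ)) * ∑ i,
        -⟪(ω i).2 - η ((ω i).1), gradient φ (f ((ω i).1)) - m0⟫ ≤ -ε} ⊆
      ⋃ ℓ : Fin K, {ω : Fin n → Euc d × Euc K | (n : ℝ) * ε / K ≤ ∑ i, W ℓ (ω i)} := by
    intro ω hω
    simp only [Set.mem_setOf_eq] at hω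
    have hinner : ∀ i : Fin n, ⟪(ω i).2 - η ((ω i).1), gradient φ (f ((ω i).1)) - m0⟫
        = ∑ ℓ : Fin K, W ℓ (ω i) := by
      intro i
      rw [PiLp.inner_apply]
      refine Finset.sum_congr rfl fun ℓ _ => ?_
      simp only [RCLike.inner_apply, conj_trivial, hWdef, PiLp.sub_apply]
      exact mul_comm _ _
    simp only [hinner] at hω
    have hT : (n : ℝ) * ε ≤ ∑ i, ∑ ℓ : Fin K, W ℓ (ω i) := by
      have h1 : ∑ i, -(∑ ℓ : Fin K, W ℓ (ω i)) = -∑ i, ∑ ℓ : Fin K, W ℓ (ω i) := by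
        rw [Finset.sum_neg_distrib]
      rw [h1] at hω
      have h2 : ε ≤ (1 / (n:ℝ)) * ∑ i, ∑ ℓ : Fin K, W ℓ (ω i) := by
        have := hω
        rw [mul_neg] at this
        linarith
      have h3 := mul_le_mul_of_nonneg_left h2 hnpos.le
      rw [← mul_assoc, mul_one_div_cancel hnpos.ne', one_mul] at h3
      linarith [h3]
    rw [Set.mem_iUnion]
    by_contra hcon
    push_neg at hcon
    simp only [Set.mem_setOf_eq, not_le] at hcon
    have hsumlt : ∑ ℓ : Fin K, ∑ i, W ℓ (ω i) < ∑ _ℓ : Fin K, ((n:ℝ) * ε / K) :=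
      Finset.sum_lt_sum_of_nonempty Finset.univ_nonempty fun ℓ _ => hcon ℓ
    rw [Finset.sum_const, Finset.card_univ, Fintype.card_fin, nsmul_eq_mul] at hsumlt
    rw [Finset.sum_comm] at hsumlt
    have : (K : ℝ) * ((n:ℝ) * ε / K) = (n:ℝ) * ε := by field_simp
    rw [this] at hsumlt
    linarith
  calc (Measure.pi fun _ : Fin n => D) {ω | (1 / (n : ℝ)) * ∑ i,
        -⟪(ω i).2 - η ((ω i).1), gradient φ (f ((ω i).1)) - m0⟫ ≤ -ε}
      ≤ (Measure.pi fun _ : Fin n => D)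
        (⋃ ℓ : Fin K, {ω : Fin n → Euc d × Euc K | (n : ℝ) * ε / K ≤ ∑ i, W ℓ (ω i)}) :=
        measure_mono hsubset
    _ ≤ ∑' ℓ : Fin K, (Measure.pi fun _ : Fin n => D)
        {ω : Fin n → Euc d × Euc K | (n : ℝ) * ε / K ≤ ∑ i, W ℓ (ω i)} :=
        measure_iUnion_le _
    _ = ∑ ℓ : Fin K, (Measure.pi fun _ : Fin n => D)
        {ω : Fin n → Euc d × Euc K | (n : ℝ) * ε / K ≤ ∑ i, W ℓ (ω i)} := tsum_fintype _
    _ ≤ ∑ _ℓ : Fin K, ENNReal.ofReal (Real.exp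
          (-((n:ℝ) * d * ε ^ 2) / (2 * c * C ^ 2 * K ^ 2 * dΩ ^ 2 * L ^ 2 * Lg ^ 2))) :=
        Finset.sum_le_sum fun ℓ _ => hmain ℓ
    _ = ENNReal.ofReal (K * Real.exp
          (-((n:ℝ) * d * ε ^ 2) / (2 * c * C ^ 2 * K ^ 2 * dΩ ^ 2 * L ^ 2 * Lg ^ 2))) := by
        rw [Finset.sum_const, Finset.card_univ, Fintype.card_fin, nsmul_eq_mul,
          ENNReal.ofReal_mul (Nat.cast_nonneg K), ENNReal.ofReal_natCast]
end
end

section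
/- Let Ω ⊆ ℝ^K be compact convex with ℓ∞-diameter at most d_Ω, φ: Ω → ℝ strictly convex and continuously differentiable with each coordinate (∇φ)_ℓ being L_g-Lipschitz on the relevant range. Let (G_i, X_i, Y_i)_{i=1}^n be i.i.d., where G_i ∈ [r] is the mixture label, the conditional law of X_i given G_i = k satisfies c-isoperimetry for each k, and Y_i is conditionally independent of G_i given X_i. Fix an L-Lipschitz measurable f: ℝ^d → Ω and ℓ ∈ [K], and define T_{i,ℓ} := −(Y_{i,ℓ} − E[Y_{i,ℓ}|X_i]) and V̂(f)_{i,ℓ} := ∇φ(f(X_i))_ℓ − E[∇φ(f(X_i))_ℓ | G_i]. Then for every ε > 0, Pr[(1/n)Σ_{i=1}^n T_{i,ℓ}·V̂(f)_{i,ℓ} ≤ −ε] ≤ exp(−ndε² / (2cC²d_Ω²L²L_g²)), where C is the universal constant such that a product of a bounded uncorrelated factor |Z| ≤ M with a mean-zero σ-sub-Gaussian variable is CMσ-sub-Gaussian. -/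
open MeasureTheory ProbabilityTheory Real
open scoped ENNReal RealInnerProductSpace

noncomputable section

lemma integrable_of_ae_bdd {α : Type*} [MeasurableSpace α] (P : Measure α) [IsFiniteMeasure P]
    {h : α → ℝ} (hm : AEStronglyMeasurable h P) {M : ℝ} (hb : ∀ᵐ a ∂P, |h a| ≤ M) :
    Integrable h P :=
  Integrable.mono' (integrable_const M) hm (by simpa [Real.norm_eq_abs] using hb)

lemma euc_coord_le_norm {K : ℕ} (y : EuclideanSpace ℝ (Fin K)) (j : Fin K) : |y j| ≤ ‖y‖ := by
  rw [EuclideanSpace.norm_eq]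
  rw [← Real.sqrt_sq_eq_abs]
  apply Real.sqrt_le_sqrt
  have : |y j| ^ 2 = ‖y j‖ ^ 2 := by rw [Real.norm_eq_abs]
  calc y j ^ 2 = ‖y j‖ ^ 2 := by rw [Real.norm_eq_abs, sq_abs]
  _ ≤ ∑ i, ‖y i‖ ^ 2 := Finset.single_le_sum (f := fun i => ‖y i‖ ^ 2) (fun i _ => by positivity) (Finset.mem_univ j)

lemma grad_continuous {K : ℕ} {φ : EuclideanSpace ℝ (Fin K) → ℝ} (hφd : ContDiff ℝ 1 φ) :
    Continuous (fun y => gradient φ y) := by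
  have h1 : Continuous (fderiv ℝ φ) := hφd.continuous_fderiv one_ne_zero
  exact (InnerProductSpace.toDual ℝ (EuclideanSpace ℝ (Fin K))).symm.continuous.comp h1


lemma condexp_indicator_mul_fun {α : Type} (m : MeasurableSpace α)
    [mα : MeasurableSpace α] [StandardBorelSpace α]
    (P : Measure α) [IsProbabilityMeasure P] (hm : m ≤ mα)
    {β γ : Type*} [MeasurableSpace β] [MeasurableSpace γ]
    {G : α → β} {Y : α → γ} (hG : Measurable G) (hY : Measurable Y)
    (hci : CondIndepFun m hm G Y P) {s : Set β} (hs : MeasurableSet s)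
    (h : γ → ℝ) (hh : Measurable h) (Mh : ℝ) (hhb : ∀ y, |h y| ≤ Mh) :
    P[fun a => (G ⁻¹' s).indicator (fun _ => (1:ℝ)) a * h (Y a)|m] =ᵐ[P]
      fun a => (P[(G ⁻¹' s).indicator (fun _ => (1:ℝ))|m]) a * (P[fun a => h (Y a)|m]) a := by
  haveI : SigmaFinite (P.trim hm) := by
    haveI : IsFiniteMeasure (P.trim hm) := isFiniteMeasure_trim hm
    infer_instance
  set c := P[(G ⁻¹' s).indicator (fun _ => (1:ℝ))|m] with hc
  have hGs : MeasurableSet (G ⁻¹' s) := hG hs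
  have hind_int : ∀ {t : Set α}, MeasurableSet t →
      Integrable (t.indicator (fun _ => (1:ℝ))) P := fun ht =>
    (integrable_const (1:ℝ)).indicator ht
  have hc0 : 0 ≤ᵐ[P] c := condExp_nonneg (Filter.Eventually.of_forall fun a =>
    Set.indicator_nonneg (fun _ _ => zero_le_one) a)
  have hc1 : c ≤ᵐ[P] fun _ => (1:ℝ) := by
    have := condExp_mono (μ := P) (m := m) (hind_int hGs) (integrable_const (1:ℝ))
      (Filter.Eventually.of_forall fun a => Set.indicator_le_self' (fun _ _ => zero_le_one) a)
    refine this.trans ?_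
    rw [condExp_const hm]
  have hcb : ∀ᵐ a ∂P, ‖c a‖ ≤ 1 := by
    filter_upwards [hc0, hc1] with a h0 h1
    have h0' : (0:ℝ) ≤ c a := h0
    rw [Real.norm_eq_abs, abs_le]; exact ⟨by linarith, h1⟩
  have hcm : StronglyMeasurable[m] c := stronglyMeasurable_condExp
  have hcP : Measurable c := (hcm.mono hm).measurable
  have hYint : Integrable (fun a => h (Y a)) P :=
    integrable_of_ae_bdd P ((hh.comp hY).aestronglyMeasurable)
      (Filter.Eventually.of_forall fun a => hhb _)
  -- set-version from conditional independence
  have hset := (condIndepFun_iff_condExp_inter_preimage_eq_mul (μ := P) (m' := m) (hm' := hm)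
    hG hY).mp hci
  -- the core set-integral identity
  have hBset : ∀ B : Set α, MeasurableSet[m] B →
      ∫ a in B, (G ⁻¹' s).indicator (fun _ => (1:ℝ)) a * h (Y a) ∂P
        = ∫ a in B, c a * h (Y a) ∂P := by
    intro B hB
    have hBmα : MeasurableSet B := hm _ hB
    -- two pushforward measures
    set ν₁ : Measure γ := (P.restrict (G ⁻¹' s ∩ B)).map Y with hν₁
    set ν₂ : Measure γ := ((P.restrict B).withDensity (fun a => ENNReal.ofReal (c a))).map Y
      with hν₂
    have hνeq : ν₁ = ν₂ := by
      ext t ht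
      have hYt : MeasurableSet (Y ⁻¹' t) := hY ht
      -- set-version integrated over B
      have e0 : ∫ a in B, (G ⁻¹' s ∩ Y ⁻¹' t).indicator (fun _ => (1:ℝ)) a ∂P
          = ∫ a in B, c a * (Y ⁻¹' t).indicator (fun _ => (1:ℝ)) a ∂P := by
        rw [← setIntegral_condExp hm (hind_int (hGs.inter hYt)) hB]
        have e1 : ∫ a in B, (P[(G ⁻¹' s ∩ Y ⁻¹' t).indicator (fun _ => (1:ℝ))|m]) a ∂P
            = ∫ a in B, c a * (P[(Y ⁻¹' t).indicator (fun _ => (1:ℝ))|m]) a ∂P := by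
          refine setIntegral_congr_ae hBmα ?_
          filter_upwards [hset s t hs ht] with a ha _
          exact ha
        rw [e1]
        have e2 : (fun a => c a * (P[(Y ⁻¹' t).indicator (fun _ => (1:ℝ))|m]) a) =ᵐ[P]
            P[fun a => c a * (Y ⁻¹' t).indicator (fun _ => (1:ℝ)) a|m] := by
          have := condExp_stronglyMeasurable_mul_of_bound hm hcm (hind_int hYt) 1 hcb
          exact this.symm
        rw [setIntegral_congr_ae hBmα (e2.mono fun a ha _ => ha)]
        refine setIntegral_condExp hm ?_ hB
        exact (hind_int hYt).bdd_mul ((hcm.mono hm).aestronglyMeasurable) hcb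
      -- compute both sides of e0
      have lhs0 : ∫ a in B, (G ⁻¹' s ∩ Y ⁻¹' t).indicator (fun _ => (1:ℝ)) a ∂P
          = (P (B ∩ (G ⁻¹' s ∩ Y ⁻¹' t))).toReal := by
        rw [setIntegral_indicator (hGs.inter hYt), setIntegral_const, smul_eq_mul, mul_one, Measure.real]
      have rhs0 : ∫ a in B, c a * (Y ⁻¹' t).indicator (fun _ => (1:ℝ)) a ∂P
          = ∫ a in B ∩ Y ⁻¹' t, c a ∂P := by
        rw [← setIntegral_indicator hYt]
        refine setIntegral_congr_ae hBmα (Filter.Eventually.of_forall fun a _ => ?_)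
        by_cases hat : a ∈ Y ⁻¹' t <;> simp [Set.indicator_apply, hat]
      have rhs1 : ∫ a in B ∩ Y ⁻¹' t, c a ∂P
          = (∫⁻ a in B ∩ Y ⁻¹' t, ENNReal.ofReal (c a) ∂P).toReal := by
        rw [integral_eq_lintegral_of_nonneg_ae (ae_restrict_of_ae hc0)
          ((hcm.mono hm).aestronglyMeasurable.restrict)]
      -- measure computations
      have hν₁t : ν₁ t = P (B ∩ (G ⁻¹' s ∩ Y ⁻¹' t)) := by
        rw [hν₁, Measure.map_apply hY ht, Measure.restrict_apply hYt]
        congr 1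
        ext a; simp only [Set.mem_inter_iff, Set.mem_preimage]; tauto
      have hν₂t : ν₂ t = ∫⁻ a in B ∩ Y ⁻¹' t, ENNReal.ofReal (c a) ∂P := by
        rw [hν₂, Measure.map_apply hY ht, withDensity_apply _ hYt,
          Measure.restrict_restrict hYt, Set.inter_comm]
      have hfin₂ : ∫⁻ a in B ∩ Y ⁻¹' t, ENNReal.ofReal (c a) ∂P ≠ ∞ := by
        have hle : ∫⁻ a in B ∩ Y ⁻¹' t, ENNReal.ofReal (c a) ∂P
            ≤ ∫⁻ _ in B ∩ Y ⁻¹' t, 1 ∂P := by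
          refine lintegral_mono_ae (ae_restrict_of_ae (hc1.mono fun a ha => ?_))
          exact ENNReal.ofReal_le_one.mpr ha
        rw [setLIntegral_one] at hle
        exact (hle.trans_lt (measure_lt_top P _)).ne
      rw [hν₁t, hν₂t]
      rw [lhs0, rhs0, rhs1] at e0
      exact (ENNReal.toReal_eq_toReal_iff' (measure_ne_top P _) hfin₂).mp e0
    -- now transport the integral identity
    have step1 : ∫ a in B, (G ⁻¹' s).indicator (fun _ => (1:ℝ)) a * h (Y a) ∂P
        = ∫ a in B ∩ G ⁻¹' s, h (Y a) ∂P := by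
      rw [← setIntegral_indicator hGs]
      refine setIntegral_congr_ae hBmα (Filter.Eventually.of_forall fun a _ => ?_)
      by_cases hat : a ∈ G ⁻¹' s <;> simp [Set.indicator_apply, hat]
    have step2 : ∫ a in B ∩ G ⁻¹' s, h (Y a) ∂P = ∫ y, h y ∂ν₁ := by
      rw [Set.inter_comm]
      exact
      (integral_map hY.aemeasurable hh.aestronglyMeasurable).symm
    have step3 : ∫ y, h y ∂ν₂
        = ∫ a, h (Y a) ∂((P.restrict B).withDensity (fun a => ENNReal.ofReal (c a))) :=
      integral_map hY.aemeasurable hh.aestronglyMeasurable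
    have step4 : ∫ a, h (Y a) ∂((P.restrict B).withDensity (fun a => ENNReal.ofReal (c a)))
        = ∫ a in B, ((c a).toNNReal : ℝ) • h (Y a) ∂P := by
      have : (fun a => ENNReal.ofReal (c a)) = fun a => ((c a).toNNReal : ℝ≥0∞) := rfl
      rw [this, integral_withDensity_eq_integral_smul (hcP.real_toNNReal) _]
      simp [NNReal.smul_def]
    have step5 : ∫ a in B, ((c a).toNNReal : ℝ) • h (Y a) ∂P = ∫ a in B, c a * h (Y a) ∂P := by
      refine integral_congr_ae (ae_restrict_of_ae (hc0.mono fun a ha => ?_))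
      simp [Real.coe_toNNReal _ ha, smul_eq_mul]
    rw [step1, step2, hνeq, step3, step4, step5]
  -- conclude by uniqueness of conditional expectation
  have hf_int : Integrable (fun a => (G ⁻¹' s).indicator (fun _ => (1:ℝ)) a * h (Y a)) P := by
    refine integrable_of_ae_bdd P ?_ (M := |Mh|) (Filter.Eventually.of_forall fun a => ?_)
    · exact (((stronglyMeasurable_const.indicator hGs).measurable).mul
        (hh.comp hY)).aestronglyMeasurable
    · have h1 : |(G ⁻¹' s).indicator (fun _ => (1:ℝ)) a| ≤ 1 := by
        by_cases hat : a ∈ G ⁻¹' s <;> simp [Set.indicator_apply, hat]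
      calc |(G ⁻¹' s).indicator (fun _ => (1:ℝ)) a * h (Y a)|
          = |(G ⁻¹' s).indicator (fun _ => (1:ℝ)) a| * |h (Y a)| := abs_mul _ _
        _ ≤ 1 * |Mh| := by
            refine mul_le_mul h1 ((hhb _).trans (le_abs_self _)) (abs_nonneg _) zero_le_one
        _ = |Mh| := one_mul _
  have hg_int : Integrable (fun a => c a * (P[fun a => h (Y a)|m]) a) P := by
    have := (integrable_condExp (f := fun a => h (Y a)) (m := m) (μ := P)).bdd_mul
      ((hcm.mono hm).aestronglyMeasurable) hcb
    exact this
  refine (ae_eq_condExp_of_forall_setIntegral_eq hm hf_int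
    (fun B hB _ => hg_int.integrableOn) (fun B hB _ => ?_) ?_).symm
  · -- ∫_B c * μ[hY|m] = ∫_B ind * hY
    have e2 : (fun a => c a * (P[fun a => h (Y a)|m]) a) =ᵐ[P]
        P[fun a => c a * h (Y a)|m] :=
      (condExp_stronglyMeasurable_mul_of_bound hm hcm hYint 1 hcb).symm
    rw [setIntegral_congr_ae (hm _ hB) (e2.mono fun a ha _ => ha)]
    rw [setIntegral_condExp hm (hYint.bdd_mul ((hcm.mono hm).aestronglyMeasurable) hcb) hB]
    exact (hBset B hB).symm
  · exact (hcm.mul stronglyMeasurable_condExp).aestronglyMeasurable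

def mX (d K r : ℕ) : MeasurableSpace (Fin r × Euc d × Euc K) :=
  MeasurableSpace.comap (fun q => q.2.1) inferInstance

set_option maxHeartbeats 4000000 in
/-- **Concentration of `(1/n) ∑ᵢ T_{i,ℓ} V̂(f)_{i,ℓ}` in the mixture model.** Here
`G ∈ [r]` is the mixture label, the conditional law of `X` given `G = k` is
`c`-isoperimetric, `Y` is conditionally independent of `G` given `X`,
`T_{i,ℓ} = −(Y_{i,ℓ} − E[Y_{i,ℓ}|Xᵢ])` and
`V̂(f)_{i,ℓ} = ∇φ(f(Xᵢ))_ℓ − E[∇φ(f(Xᵢ))_ℓ | Gᵢ]`. -/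
theorem That_Vhat_concentration (d K r : ℕ) (Ω : Set (Euc K))
    (hΩconv : Convex ℝ Ω) (hΩc : IsCompact Ω)
    (dΩ : ℝ) (hdΩ : ∀ x ∈ Ω, ∀ y ∈ Ω, ∀ ℓ : Fin K, |x ℓ - y ℓ| ≤ dΩ)
    (φ : Euc K → ℝ) (hφ : StrictConvexOn ℝ Ω φ) (hφd : ContDiff ℝ 1 φ)
    (P : Measure (Fin r × Euc d × Euc K)) [IsProbabilityMeasure P]
    (hsupp : ∀ᵐ q ∂P, q.2.2 ∈ Ω)
    (c : ℝ) (hc : 0 < c)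
    (hiso : ∀ k : Fin r, Isoperimetric c d ((P[|{q | q.1 = k}]).map (fun q => q.2.1)))
    (hci : CondIndepFun
      (MeasurableSpace.comap (fun q : Fin r × Euc d × Euc K => q.2.1) inferInstance)
      (measurable_fst.comp measurable_snd).comap_le (fun q => q.1) (fun q => q.2.2) P)
    (η : Euc d → Euc K) (hη : Measurable η)
    (hver : (fun q : Fin r × Euc d × Euc K => η q.2.1) =ᵐ[P]
      P[(fun q : Fin r × Euc d × Euc K => q.2.2) |
        MeasurableSpace.comap (fun q : Fin r × Euc d × Euc K => q.2.1) inferInstance])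
    (C : ℝ) (hC : MultConstGood C)
    (L Lg : ℝ) (hL : 0 ≤ L)
    (f : Euc d → Euc K) (hf : Measurable f) (hfΩ : ∀ x, f x ∈ Ω)
    (hflip : LipschitzWith (Real.toNNReal L) f)
    (hLg : ∀ ℓ : Fin K, LipschitzOnWith (Real.toNNReal Lg)
      (fun y => gradient φ y ℓ) (Set.range f))
    (ℓ : Fin K) (n : ℕ) (ε : ℝ) (hε : 0 < ε) :
    (Measure.pi fun _ : Fin n => P)
        {ω | (1 / (n : ℝ)) * ∑ i,
            (-((ω i).2.2 ℓ - η ((ω i).2.1) ℓ)) *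
              (gradient φ (f ((ω i).2.1)) ℓ -
                ∫ q, gradient φ (f q.2.1) ℓ ∂(P[|{q | q.1 = (ω i).1}])) ≤ -ε} ≤
      ENNReal.ofReal (Real.exp
        (-(n * d * ε ^ 2) / (2 * c * C ^ 2 * dΩ ^ 2 * L ^ 2 * Lg ^ 2))) := by
  classical
  have hCpos : 0 < C := hC.1
  by_cases htriv : ((n : ℝ) * d * ε ^ 2 = 0) ∨ ((2 * c * C ^ 2 * dΩ ^ 2 * L ^ 2 * Lg ^ 2 : ℝ) = 0)
  · have hexp : (-((n : ℝ) * d * ε ^ 2) / (2 * c * C ^ 2 * dΩ ^ 2 * L ^ 2 * Lg ^ 2) : ℝ) = 0 := by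
      rcases htriv with h | h
      · rw [h, neg_zero, zero_div]
      · rw [h, div_zero]
    rw [hexp, Real.exp_zero, ENNReal.ofReal_one]
    haveI : IsProbabilityMeasure (Measure.pi fun _ : Fin n => P) :=
      MeasureTheory.Measure.pi.instIsProbabilityMeasure _
    exact prob_le_one
  push_neg at htriv
  obtain ⟨hnum, hden⟩ := htriv
  have hn0 : (n : ℝ) ≠ 0 := fun h => hnum (by rw [h]; ring)
  have hd0 : (d : ℝ) ≠ 0 := fun h => hnum (by rw [h]; ring)
  have hdΩ0 : dΩ ≠ 0 := fun h => hden (by rw [h]; ring)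
  have hL0 : L ≠ 0 := fun h => hden (by rw [h]; ring)
  have hLg0 : Lg ≠ 0 := fun h => hden (by rw [h]; ring)
  have hLpos : 0 < L := lt_of_le_of_ne hL (Ne.symm hL0)
  have hdpos : 0 < (d : ℝ) := lt_of_le_of_ne (Nat.cast_nonneg d) (Ne.symm hd0)
  have hnpos : 0 < (n : ℝ) := lt_of_le_of_ne (Nat.cast_nonneg n) (Ne.symm hn0)
  -- Ω is nonempty
  have hΩne : Ω.Nonempty := by
    have : (ae P).NeBot := ae_neBot.mpr (IsProbabilityMeasure.ne_zero P)
    obtain ⟨q, hq⟩ := hsupp.exists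
    exact ⟨_, hq⟩
  have hdΩnn : 0 ≤ dΩ := by
    obtain ⟨y, hy⟩ := hΩne
    have := hdΩ y hy y hy ℓ
    simpa using (abs_nonneg (y ℓ - y ℓ)).trans this
  have hdΩpos : 0 < dΩ := lt_of_le_of_ne hdΩnn (Ne.symm hdΩ0)
  -- basic measurability
  set pp : Fin r × Euc d × Euc K → Euc d := fun q => q.2.1 with hppdef
  have hpp : Measurable pp := measurable_fst.comp measurable_snd
  have hm' : mX d K r ≤ (inferInstance : MeasurableSpace (Fin r × Euc d × Euc K)) :=
    (measurable_fst.comp measurable_snd :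
      Measurable fun q : Fin r × Euc d × Euc K => q.2.1).comap_le
  have hppm' : Measurable[mX d K r] pp := fun s hs => ⟨s, hs, rfl⟩
  haveI hSF : SigmaFinite (P.trim hm') := by
    haveI : IsFiniteMeasure (P.trim hm') := isFiniteMeasure_trim hm'
    infer_instance
  -- coordinate bounds on Ω
  have hcoordcont : Continuous (fun y : Euc K => y ℓ) := by
    exact (EuclideanSpace.proj (𝕜 := ℝ) ℓ).continuous
  set Sl : ℝ := sSup ((fun y : Euc K => y ℓ) '' Ω) with hSl
  set Il : ℝ := sInf ((fun y : Euc K => y ℓ) '' Ω) with hIl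
  have himgc : IsCompact ((fun y : Euc K => y ℓ) '' Ω) := hΩc.image hcoordcont
  have himgne : ((fun y : Euc K => y ℓ) '' Ω).Nonempty := hΩne.image _
  have hIle : ∀ y ∈ Ω, Il ≤ y ℓ := fun y hy =>
    csInf_le himgc.bddBelow (Set.mem_image_of_mem _ hy)
  have hSge : ∀ y ∈ Ω, y ℓ ≤ Sl := fun y hy =>
    le_csSup himgc.bddAbove (Set.mem_image_of_mem _ hy)
  have hIS : Il ≤ Sl := by
    obtain ⟨y, hy⟩ := hΩne
    exact (hIle y hy).trans (hSge y hy)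
  have hSId : Sl - Il ≤ dΩ := by
    have h1 : Sl ≤ Il + dΩ := by
      refine csSup_le himgne ?_
      rintro _ ⟨y, hy, rfl⟩
      have h2 : y ℓ - dΩ ≤ Il := by
        refine le_csInf himgne ?_
        rintro _ ⟨z, hz, rfl⟩
        have := abs_le.mp (hdΩ y hy z hz ℓ)
        linarith [this.2]
      linarith
    linarith
  -- gradient bound
  have hgradc : Continuous (fun y : Euc K => gradient φ y ℓ) :=
    hcoordcont.comp (grad_continuous hφd)
  set gℓ : Euc d → ℝ := fun x => gradient φ (f x) ℓ with hgℓdef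
  have hgℓmeas : Measurable gℓ := hgradc.measurable.comp hf
  obtain ⟨Bg0, hBg0⟩ := hΩc.exists_bound_of_continuousOn hgradc.continuousOn
  set Bg : ℝ := max Bg0 0 with hBg
  have hBgnn : 0 ≤ Bg := le_max_right _ _
  have hgb : ∀ x, |gℓ x| ≤ Bg := fun x =>
    le_trans (by simpa [Real.norm_eq_abs] using hBg0 _ (hfΩ x)) (le_max_left _ _)
  -- the conditional means
  set mfun : Fin r → ℝ := fun j => ∫ q, gradient φ (f q.2.1) ℓ ∂(P[|{q | q.1 = j}]) with hmfun
  have hmA : ∀ j : Fin r, MeasurableSet {q : Fin r × Euc d × Euc K | q.1 = j} :=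
    fun j => measurable_fst (measurableSet_singleton j)
  have hconduniv : ∀ j : Fin r, (P[|{q | q.1 = j}]) Set.univ ≤ 1 := by
    intro j
    rw [cond_apply (hmA j), Set.inter_univ]
    rcases eq_or_ne (P {q | q.1 = j}) 0 with h0 | h0
    · simp [h0]
    · rw [ENNReal.inv_mul_cancel h0 (measure_ne_top P _)]
  have hcondfin : ∀ j : Fin r, IsFiniteMeasure (P[|{q | q.1 = j}]) := by
    intro j
    constructor
    exact lt_of_le_of_lt (hconduniv j) ENNReal.one_lt_top
  have hmfunb : ∀ j, |mfun j| ≤ Bg := by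
    intro j
    haveI := hcondfin j
    rw [hmfun]
    calc |∫ q, gradient φ (f q.2.1) ℓ ∂(P[|{q | q.1 = j}])|
        ≤ Bg * ((P[|{q | q.1 = j}]) Set.univ).toReal := by
          simpa [Real.norm_eq_abs, Measure.real] using
            norm_integral_le_of_norm_le_const (μ := P[|{q | q.1 = j}])
              (f := fun q : Fin r × Euc d × Euc K => gradient φ (f q.2.1) ℓ)
              (C := Bg) (Filter.Eventually.of_forall fun q => by
                simpa [Real.norm_eq_abs] using hgb q.2.1)
      _ ≤ Bg * 1 := by
          refine mul_le_mul_of_nonneg_left ?_ hBgnn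
          calc ((P[|{q | q.1 = j}]) Set.univ).toReal ≤ (1 : ℝ≥0∞).toReal :=
                ENNReal.toReal_mono (by simp) (hconduniv j)
            _ = 1 := by simp
      _ = Bg := mul_one _
  -- Z and W
  set Z : Fin r × Euc d × Euc K → ℝ := fun q => -(q.2.2 ℓ - η q.2.1 ℓ) with hZdef
  have hZmeas : Measurable Z := by
    apply Measurable.neg
    exact ((hcoordcont.measurable.comp (measurable_snd.comp measurable_snd)).sub
      (hcoordcont.measurable.comp (hη.comp hpp)))
  set W : Fin r × Euc d × Euc K → ℝ := fun q => Z q * (gℓ q.2.1 - mfun q.1) with hWdef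
  have hWmeas : Measurable W :=
    hZmeas.mul ((hgℓmeas.comp hpp).sub ((measurable_of_countable mfun).comp measurable_fst))
  -- Y' coordinate and its conditional expectation
  set Y' : Fin r × Euc d × Euc K → ℝ := fun q => q.2.2 ℓ with hY'def
  have hY'meas : Measurable Y' := hcoordcont.measurable.comp (measurable_snd.comp measurable_snd)
  have hY'rng : ∀ᵐ q ∂P, Il ≤ Y' q ∧ Y' q ≤ Sl :=
    hsupp.mono fun q hq => ⟨hIle _ hq, hSge _ hq⟩
  obtain ⟨RΩ, hRΩ⟩ := isBounded_iff_forall_norm_le.mp hΩc.isBounded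
  have hYm_int : Integrable (fun q : Fin r × Euc d × Euc K => q.2.2) P :=
    Integrable.mono' (integrable_const RΩ)
      (measurable_snd.comp measurable_snd).aestronglyMeasurable
      (hsupp.mono fun q hq => hRΩ _ hq)
  have hY'int : Integrable Y' P :=
    integrable_of_ae_bdd P hY'meas.aestronglyMeasurable
      (hsupp.mono fun q hq => (euc_coord_le_norm q.2.2 ℓ).trans (hRΩ _ hq))
  -- coordinate of vector conditional expectation
  have hηY : P[Y'|mX d K r] =ᵐ[P] fun q => η (pp q) ℓ := by
    have hproj_apply : ∀ y : Euc K, (EuclideanSpace.proj (𝕜 := ℝ) ℓ) y = y ℓ := fun y => rfl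
    have hgcongr : (fun q : Fin r × Euc d × Euc K => η (pp q) ℓ) =ᵐ[P]
        fun q => (EuclideanSpace.proj (𝕜 := ℝ) ℓ)
          ((P[(fun q : Fin r × Euc d × Euc K => q.2.2)|mX d K r]) q) := by
      filter_upwards [hver] with q hq
      rw [hproj_apply]
      exact congrArg (fun v : Euc K => v ℓ) hq
    have hproj_int : Integrable
        (fun q => (EuclideanSpace.proj (𝕜 := ℝ) ℓ)
          ((P[(fun q : Fin r × Euc d × Euc K => q.2.2)|mX d K r]) q)) P :=
      ContinuousLinearMap.integrable_comp (EuclideanSpace.proj (𝕜 := ℝ) ℓ) integrable_condExp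
    have hg_int : Integrable (fun q => η (pp q) ℓ) P := hproj_int.congr hgcongr.symm
    refine (ae_eq_condExp_of_forall_setIntegral_eq hm' hY'int
      (fun B hB _ => hg_int.integrableOn) (fun B hB _ => ?_) ?_).symm
    · calc ∫ q in B, η (pp q) ℓ ∂P
          = ∫ q in B, (EuclideanSpace.proj (𝕜 := ℝ) ℓ)
              ((P[(fun q : Fin r × Euc d × Euc K => q.2.2)|mX d K r]) q) ∂P :=
            setIntegral_congr_ae (hm' _ hB) (hgcongr.mono fun q hq _ => hq)
        _ = (EuclideanSpace.proj (𝕜 := ℝ) ℓ)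
              (∫ q in B, (P[(fun q : Fin r × Euc d × Euc K => q.2.2)|mX d K r]) q ∂P) :=
            (EuclideanSpace.proj (𝕜 := ℝ) ℓ).integral_comp_comm
              integrable_condExp.integrableOn
        _ = (EuclideanSpace.proj (𝕜 := ℝ) ℓ)
              (∫ q in B, (fun q : Fin r × Euc d × Euc K => q.2.2) q ∂P) := by
            rw [setIntegral_condExp hm' hYm_int hB]
        _ = ∫ q in B, (EuclideanSpace.proj (𝕜 := ℝ) ℓ)
              ((fun q : Fin r × Euc d × Euc K => q.2.2) q) ∂P :=
            ((EuclideanSpace.proj (𝕜 := ℝ) ℓ).integral_comp_comm hYm_int.integrableOn).symm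
        _ = ∫ q in B, Y' q ∂P := by
            refine setIntegral_congr_ae (hm' _ hB)
              (Filter.Eventually.of_forall fun q _ => ?_)
            rw [hproj_apply]
    · exact ((hcoordcont.measurable.comp hη).comp
        hppm').stronglyMeasurable.aestronglyMeasurable
  have hηrng : ∀ᵐ q ∂P, Il ≤ η (pp q) ℓ ∧ η (pp q) ℓ ≤ Sl := by
    have hlow := condExp_mono (m := mX d K r) (μ := P) (integrable_const Il) hY'int
      (hY'rng.mono fun q h => h.1)
    have hup := condExp_mono (m := mX d K r) (μ := P) hY'int (integrable_const Sl)
      (hY'rng.mono fun q h => h.2)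
    rw [condExp_const hm'] at hlow hup
    filter_upwards [hlow, hup, hηY] with q h1 h2 h3
    rw [← h3]
    exact ⟨h1, h2⟩
  have hZbdd : ∀ᵐ q ∂P, |Z q| ≤ dΩ := by
    filter_upwards [hY'rng, hηrng] with q h1 h2
    have : |Z q| = |Y' q - η (pp q) ℓ| := by rw [hZdef, abs_neg]
    rw [this, abs_le]
    constructor <;> [linarith [h1.1, h2.2, hSId]; linarith [h1.2, h2.1, hSId]]
  have hWbdd : ∀ᵐ q ∂P, |W q| ≤ dΩ * (2 * Bg) := by
    filter_upwards [hZbdd] with q h1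
    rw [hWdef, abs_mul]
    refine mul_le_mul h1 ?_ (abs_nonneg _) hdΩnn
    calc |gℓ q.2.1 - mfun q.1| ≤ |gℓ q.2.1| + |mfun q.1| := abs_sub _ _
      _ ≤ Bg + Bg := add_le_add (hgb _) (hmfunb _)
      _ = 2 * Bg := by ring
  have hexpint : ∀ l : ℝ, Integrable (fun q => Real.exp (l * W q)) P := by
    intro l
    refine integrable_of_ae_bdd P
      (Real.measurable_exp.comp (hWmeas.const_mul l)).aestronglyMeasurable
      (M := Real.exp (|l| * (dΩ * (2 * Bg)))) ?_
    filter_upwards [hWbdd] with q h1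
    rw [abs_of_pos (Real.exp_pos _)]
    refine Real.exp_le_exp.mpr ?_
    calc l * W q ≤ |l * W q| := le_abs_self _
      _ = |l| * |W q| := abs_mul _ _
      _ ≤ |l| * (dΩ * (2 * Bg)) := mul_le_mul_of_nonneg_left h1 (abs_nonneg l)
  -- variance proxy
  set s2 : ℝ := c * C ^ 2 * dΩ ^ 2 * L ^ 2 * Lg ^ 2 / d with hs2def
  have hs2pos : 0 < s2 := by
    have hLg2 : 0 < Lg ^ 2 := lt_of_le_of_ne (sq_nonneg Lg) (Ne.symm (pow_ne_zero 2 hLg0))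
    have hdΩ2 : 0 < dΩ ^ 2 := by positivity
    have hL2 : 0 < L ^ 2 := pow_pos hLpos 2
    have hC2 : 0 < C ^ 2 := pow_pos hCpos 2
    rw [hs2def]
    exact div_pos (mul_pos (mul_pos (mul_pos (mul_pos hc hC2) hdΩ2) hL2) hLg2) hdpos
  -- the per-class MGF bound
  -- clamp function infrastructure
  set hcl : Euc K → ℝ := fun y => max Il (min (y ℓ) Sl) with hcldef
  have hclmeas : Measurable hcl :=
    measurable_const.max (hcoordcont.measurable.min measurable_const)
  have hclrange : ∀ y, Il ≤ hcl y ∧ hcl y ≤ Sl := fun y =>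
    ⟨le_max_left _ _, max_le hIS (min_le_right _ _)⟩
  have hclbd : ∀ y, |hcl y| ≤ max |Il| |Sl| := by
    intro y
    refine abs_le.mpr ⟨?_, ?_⟩
    · have h1 := (hclrange y).1
      have h2 : -|Il| ≤ Il := neg_abs_le Il
      have h3 : |Il| ≤ max |Il| |Sl| := le_max_left _ _
      linarith
    · have h1 := (hclrange y).2
      have h2 : Sl ≤ |Sl| := le_abs_self Sl
      have h3 : |Sl| ≤ max |Il| |Sl| := le_max_right _ _
      linarith
  have hclY : ∀ᵐ q ∂P, hcl ((fun q : Fin r × Euc d × Euc K => q.2.2) q) = Y' q := by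
    filter_upwards [hsupp] with q hq
    show max Il (min (q.2.2 ℓ) Sl) = q.2.2 ℓ
    rw [min_eq_left (hSge _ hq), max_eq_right (hIle _ hq)]
  -- per-class MGF bound
  have hMGFcond : ∀ j : Fin r, P {q | q.1 = j} ≠ 0 → ∀ l : ℝ,
      ∫ q, Real.exp (l * W q) ∂(P[|{q | q.1 = j}]) ≤ Real.exp (l ^ 2 * s2 / 2) := by
    intro j hPA l
    haveI : IsProbabilityMeasure (P[|{q | q.1 = j}]) := cond_isProbabilityMeasure hPA
    set μA : Measure (Fin r × Euc d × Euc K) := P[|{q | q.1 = j}] with hμAdef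
    have hAC : μA ≪ P := cond_absolutelyContinuous
    haveI := hcondfin j
    have hj_ae : ∀ᵐ q ∂μA, q.1 = j := by
      rw [ae_iff, hμAdef, ProbabilityTheory.cond, Measure.smul_apply, smul_eq_mul]
      have hres : P.restrict {q | q.1 = j} ({q : Fin r × Euc d × Euc K | q.1 = j})ᶜ = 0 := by
        rw [Measure.restrict_apply (hmA j).compl, Set.compl_inter_self, measure_empty]
      rw [show {a : Fin r × Euc d × Euc K | ¬ a.1 = j}
        = ({q : Fin r × Euc d × Euc K | q.1 = j})ᶜ from rfl, hres, mul_zero]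
    -- the centered Lipschitz factor
    have hXmeas : Measurable (fun q : Fin r × Euc d × Euc K => gℓ (pp q) - mfun j) :=
      (hgℓmeas.comp hpp).sub measurable_const
    have hgint : Integrable (fun q : Fin r × Euc d × Euc K => gℓ (pp q)) μA :=
      integrable_of_ae_bdd μA (hgℓmeas.comp hpp).aestronglyMeasurable
        (Filter.Eventually.of_forall fun q => hgb (pp q))
    have hXmean : (∫ q, (gℓ (pp q) - mfun j) ∂μA) = 0 := by
      rw [integral_sub hgint (integrable_const _), integral_const, probReal_univ,
        one_smul]
      have : mfun j = ∫ q, gℓ (pp q) ∂μA := rfl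
      rw [← this, sub_self]
    -- Lipschitz constant for gℓ
    set L' : ℝ := L * max Lg 0 with hL'def
    have hL'nn : 0 ≤ L' := mul_nonneg hL (le_max_right _ _)
    have hglip : LipschitzWith (Real.toNNReal L') gℓ := by
      refine LipschitzWith.of_dist_le_mul fun x y => ?_
      have h1 : dist (gℓ x) (gℓ y) ≤ (Real.toNNReal Lg : ℝ) * dist (f x) (f y) :=
        (lipschitzOnWith_iff_dist_le_mul.mp (hLg ℓ)) (f x) (Set.mem_range_self x) (f y)
          (Set.mem_range_self y)
      have h2 : dist (f x) (f y) ≤ (Real.toNNReal L : ℝ) * dist x y := hflip.dist_le_mul x y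
      rw [Real.coe_toNNReal' Lg] at h1
      rw [Real.coe_toNNReal L hL] at h2
      rw [Real.coe_toNNReal L' hL'nn]
      have h3 : max Lg 0 * dist (f x) (f y) ≤ max Lg 0 * (L * dist x y) :=
        mul_le_mul_of_nonneg_left h2 (le_max_right _ _)
      calc dist (gℓ x) (gℓ y) ≤ max Lg 0 * dist (f x) (f y) := h1
        _ ≤ max Lg 0 * (L * dist x y) := h3
        _ = L' * dist x y := by rw [hL'def]; ring
    -- sub-Gaussianity of the centered factor under μA
    have hmap_mean : ∫ x, gℓ x ∂(μA.map pp) = mfun j := by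
      rw [integral_map hpp.aemeasurable hgℓmeas.aestronglyMeasurable]
    have hXsg : SubGaussianPar μA (fun q => gℓ (pp q) - mfun j) (L' * Real.sqrt (c / d)) := by
      intro l'
      have h := hiso j L' gℓ hL'nn hglip l'
      rw [hmap_mean] at h
      have hmeas2 : AEStronglyMeasurable (fun x : Euc d => Real.exp (l' * (gℓ x - mfun j)))
          (μA.map pp) :=
        Measurable.aestronglyMeasurable
          (show Measurable fun x : Euc d => Real.exp (l' * (gℓ x - mfun j)) from
            Real.measurable_exp.comp ((hgℓmeas.sub measurable_const).const_mul l'))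
      rw [integral_map hpp.aemeasurable hmeas2] at h
      rw [show (∫ a', (fun q : Fin r × Euc d × Euc K => gℓ (pp q) - mfun j) a' ∂μA) = 0
        from hXmean]
      simpa only [sub_zero] using h
    have hZbddA : ∀ᵐ q ∂μA, |Z q| ≤ dΩ := hAC.ae_le hZbdd
    -- The crucial vanishing correlation
    have hZXint0 : (∫ q, Z q * (gℓ (pp q) - mfun j) ∂μA) = 0 := by
      -- conditional expectation of the indicator
      set indA : Fin r × Euc d × Euc K → ℝ :=
        ((fun q : Fin r × Euc d × Euc K => q.1) ⁻¹' {j}).indicator (fun _ => (1:ℝ)) with hindA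
      set c' : Fin r × Euc d × Euc K → ℝ := P[indA|mX d K r] with hc'def
      have hindmeas : Measurable indA :=
        (measurable_const.indicator (hmA j))
      have hindint : Integrable indA P := (integrable_const (1:ℝ)).indicator (hmA j)
      have hindb : ∀ q, |indA q| ≤ 1 := by
        intro q
        rw [hindA]
        by_cases hq : q ∈ (fun q : Fin r × Euc d × Euc K => q.1) ⁻¹' {j} <;>
          simp [Set.indicator_apply, hq]
      have hc'm : StronglyMeasurable[mX d K r] c' := stronglyMeasurable_condExp
      have hc'0 : 0 ≤ᵐ[P] c' := condExp_nonneg (Filter.Eventually.of_forall fun a =>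
        Set.indicator_nonneg (fun _ _ => zero_le_one) a)
      have hc'1 : c' ≤ᵐ[P] fun _ => (1:ℝ) := by
        have h := condExp_mono (μ := P) (m := mX d K r) hindint (integrable_const (1:ℝ))
          (Filter.Eventually.of_forall fun a =>
            Set.indicator_le_self' (fun _ _ => zero_le_one) a)
        refine h.trans ?_
        rw [condExp_const hm']
      have hc'b : ∀ᵐ a ∂P, ‖c' a‖ ≤ 1 := by
        filter_upwards [hc'0, hc'1] with a h0 h1
        have h0' : (0:ℝ) ≤ c' a := h0
        rw [Real.norm_eq_abs, abs_le]
        exact ⟨by linarith, h1⟩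
      -- product rule from conditional independence
      have hkeyprod := condexp_indicator_mul_fun (mX d K r) P hm'
        (measurable_fst : Measurable fun q : Fin r × Euc d × Euc K => q.1)
        (measurable_snd.comp measurable_snd : Measurable fun q : Fin r × Euc d × Euc K => q.2.2)
        hci (measurableSet_singleton j) hcl hclmeas (max |Il| |Sl|) hclbd
      have hindY : P[fun a => indA a * Y' a|mX d K r] =ᵐ[P]
          fun a => c' a * (P[Y'|mX d K r]) a := by
        have h1 : (fun a : Fin r × Euc d × Euc K =>
            indA a * hcl ((fun q : Fin r × Euc d × Euc K => q.2.2) a)) =ᵐ[P]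
            fun a => indA a * Y' a := by
          filter_upwards [hclY] with a ha
          rw [ha]
        have h2 : (fun a : Fin r × Euc d × Euc K =>
            hcl ((fun q : Fin r × Euc d × Euc K => q.2.2) a)) =ᵐ[P] Y' := hclY
        calc P[fun a => indA a * Y' a|mX d K r]
            =ᵐ[P] P[fun a : Fin r × Euc d × Euc K =>
              indA a * hcl ((fun q : Fin r × Euc d × Euc K => q.2.2) a)|mX d K r] :=
              condExp_congr_ae h1.symm
          _ =ᵐ[P] fun a => c' a * (P[fun a : Fin r × Euc d × Euc K =>
              hcl ((fun q : Fin r × Euc d × Euc K => q.2.2) a)|mX d K r]) a := hkeyprod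
          _ =ᵐ[P] fun a => c' a * (P[Y'|mX d K r]) a := by
              have h3 := condExp_congr_ae (μ := P) (m := mX d K r) h2
              filter_upwards [h3] with a ha
              rw [ha]
      have hindY' : P[fun a => indA a * Y' a|mX d K r] =ᵐ[P]
          fun a => c' a * η (pp a) ℓ := by
        calc P[fun a => indA a * Y' a|mX d K r]
            =ᵐ[P] fun a => c' a * (P[Y'|mX d K r]) a := hindY
          _ =ᵐ[P] fun a => c' a * η (pp a) ℓ := by
              filter_upwards [hηY] with a ha
              rw [ha]
      -- bounded m'-measurable factor u ∘ pp
      have hu_m' : Measurable[mX d K r] (fun q : Fin r × Euc d × Euc K => gℓ (pp q) - mfun j) :=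
        ((hgℓmeas.sub measurable_const).comp hppm')
      have hu_bd : ∀ q : Fin r × Euc d × Euc K, |gℓ (pp q) - mfun j| ≤ 2 * Bg := by
        intro q
        calc |gℓ (pp q) - mfun j| ≤ |gℓ (pp q)| + |mfun j| := abs_sub _ _
          _ ≤ Bg + Bg := add_le_add (hgb _) (hmfunb _)
          _ = 2 * Bg := by ring
      have hηℓ_m' : Measurable[mX d K r] (fun q : Fin r × Euc d × Euc K => η (pp q) ℓ) :=
        ((hcoordcont.measurable.comp hη).comp hppm')
      -- (a) : ∫ indA·(u∘pp)·ηℓ∘pp = ∫ c'·(u∘pp)·ηℓ∘pp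
      have hv_m' : StronglyMeasurable[mX d K r]
          (fun q : Fin r × Euc d × Euc K => (gℓ (pp q) - mfun j) * η (pp q) ℓ) :=
        (hu_m'.mul hηℓ_m').stronglyMeasurable
      have hv_bd : ∀ᵐ q ∂P, ‖(gℓ (pp q) - mfun j) * η (pp q) ℓ‖ ≤ 2 * Bg * max |Il| |Sl| := by
        filter_upwards [hηrng] with q hq
        rw [Real.norm_eq_abs, abs_mul]
        refine mul_le_mul (hu_bd q) ?_ (abs_nonneg _) (by positivity)
        rw [abs_le]
        constructor
        · have h2 : -|Il| ≤ Il := neg_abs_le Il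
          have h3 : |Il| ≤ max |Il| |Sl| := le_max_left _ _
          linarith [hq.1]
        · have h2 : Sl ≤ |Sl| := le_abs_self Sl
          have h3 : |Sl| ≤ max |Il| |Sl| := le_max_right _ _
          linarith [hq.2]
      have hInta : ∫ q, ((gℓ (pp q) - mfun j) * η (pp q) ℓ) * indA q ∂P
          = ∫ q, ((gℓ (pp q) - mfun j) * η (pp q) ℓ) * c' q ∂P := by
        have hpull := condExp_stronglyMeasurable_mul_of_bound hm' hv_m' hindint
          (2 * Bg * max |Il| |Sl|) hv_bd
        have hprodint : Integrable
            (fun q => ((gℓ (pp q) - mfun j) * η (pp q) ℓ) * indA q) P := by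
          refine integrable_of_ae_bdd P ?_
            (M := 2 * Bg * max |Il| |Sl| * 1) ?_
          · exact ((((hgℓmeas.comp hpp).sub measurable_const).mul
              ((hcoordcont.measurable.comp hη).comp hpp)).mul hindmeas).aestronglyMeasurable
          · filter_upwards [hv_bd] with q hq
            rw [abs_mul]
            refine mul_le_mul ?_ (hindb q) (abs_nonneg _) (by positivity)
            exact hq
        calc ∫ q, ((gℓ (pp q) - mfun j) * η (pp q) ℓ) * indA q ∂P
            = ∫ q, (P[fun q => ((gℓ (pp q) - mfun j) * η (pp q) ℓ) * indA q|mX d K r]) q ∂P :=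
              (integral_condExp hm').symm
          _ = ∫ q, ((gℓ (pp q) - mfun j) * η (pp q) ℓ) * c' q ∂P := by
              refine integral_congr_ae ?_
              filter_upwards [hpull] with q hq
              exact hq
      -- (b) : ∫ (u∘pp)·(indA·Y') = ∫ (u∘pp)·(c'·ηℓ∘pp)
      have hY'bda : ∀ᵐ q ∂P, |Y' q| ≤ max |Il| |Sl| := by
        filter_upwards [hY'rng] with q hq
        rw [abs_le]
        constructor
        · have h2 : -|Il| ≤ Il := neg_abs_le Il
          have h3 : |Il| ≤ max |Il| |Sl| := le_max_left _ _
          linarith [hq.1]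
        · have h2 : Sl ≤ |Sl| := le_abs_self Sl
          have h3 : |Sl| ≤ max |Il| |Sl| := le_max_right _ _
          linarith [hq.2]
      have hIY : Integrable (fun q => indA q * Y' q) P := by
        refine integrable_of_ae_bdd P
          ((hindmeas.mul hY'meas).aestronglyMeasurable) (M := 1 * max |Il| |Sl|) ?_
        filter_upwards [hY'bda] with q hq
        rw [abs_mul]
        exact mul_le_mul (hindb q) hq (abs_nonneg _) zero_le_one
      have hu_sm : StronglyMeasurable[mX d K r]
          (fun q : Fin r × Euc d × Euc K => gℓ (pp q) - mfun j) := hu_m'.stronglyMeasurable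
      have hu_bd' : ∀ᵐ q ∂P, ‖gℓ (pp q) - mfun j‖ ≤ 2 * Bg :=
        Filter.Eventually.of_forall fun q => by
          simpa [Real.norm_eq_abs] using hu_bd q
      have hIntb : ∫ q, (gℓ (pp q) - mfun j) * (indA q * Y' q) ∂P
          = ∫ q, (gℓ (pp q) - mfun j) * (c' q * η (pp q) ℓ) ∂P := by
        have hpull := condExp_stronglyMeasurable_mul_of_bound hm' hu_sm hIY (2 * Bg) hu_bd'
        have hprodint : Integrable
            (fun q => (gℓ (pp q) - mfun j) * (indA q * Y' q)) P := by
          refine integrable_of_ae_bdd P ?_ (M := 2 * Bg * (1 * max |Il| |Sl|)) ?_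
          · exact (((hgℓmeas.comp hpp).sub measurable_const).mul
              (hindmeas.mul hY'meas)).aestronglyMeasurable
          · filter_upwards [hY'bda] with q hq
            rw [abs_mul]
            refine mul_le_mul (hu_bd q) ?_ (abs_nonneg _) (by positivity)
            rw [abs_mul]
            exact mul_le_mul (hindb q) hq (abs_nonneg _) zero_le_one
        calc ∫ q, (gℓ (pp q) - mfun j) * (indA q * Y' q) ∂P
            = ∫ q, (P[fun q => (gℓ (pp q) - mfun j) * (indA q * Y' q)|mX d K r]) q ∂P :=
              (integral_condExp hm').symm
          _ = ∫ q, (gℓ (pp q) - mfun j) *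
              (P[fun q => indA q * Y' q|mX d K r]) q ∂P := by
              refine integral_congr_ae ?_
              filter_upwards [hpull] with q hq
              exact hq
          _ = ∫ q, (gℓ (pp q) - mfun j) * (c' q * η (pp q) ℓ) ∂P := by
              refine integral_congr_ae ?_
              filter_upwards [hindY'] with q hq
              rw [hq]
      -- assemble : the integral over the fiber vanishes
      have hsplitZ : ∀ q : Fin r × Euc d × Euc K,
          indA q * (Z q * (gℓ (pp q) - mfun j))
            = ((gℓ (pp q) - mfun j) * η (pp q) ℓ) * indA q
              - (gℓ (pp q) - mfun j) * (indA q * Y' q) := by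
        intro q
        have : Z q = η (pp q) ℓ - Y' q := by
          show -(q.2.2 ℓ - η q.2.1 ℓ) = η q.2.1 ℓ - q.2.2 ℓ
          ring
        rw [this]
        ring
      have hintZX1 : Integrable
          (fun q => ((gℓ (pp q) - mfun j) * η (pp q) ℓ) * indA q) P := by
        refine integrable_of_ae_bdd P ?_ (M := 2 * Bg * max |Il| |Sl| * 1) ?_
        · exact ((((hgℓmeas.comp hpp).sub measurable_const).mul
            ((hcoordcont.measurable.comp hη).comp hpp)).mul hindmeas).aestronglyMeasurable
        · filter_upwards [hv_bd] with q hq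
          rw [abs_mul]
          refine mul_le_mul ?_ (hindb q) (abs_nonneg _) (by positivity)
          exact hq
      have hintZX2 : Integrable
          (fun q => (gℓ (pp q) - mfun j) * (indA q * Y' q)) P := by
        refine integrable_of_ae_bdd P ?_ (M := 2 * Bg * (1 * max |Il| |Sl|)) ?_
        · exact (((hgℓmeas.comp hpp).sub measurable_const).mul
            (hindmeas.mul hY'meas)).aestronglyMeasurable
        · filter_upwards [hY'bda] with q hq
          rw [abs_mul]
          refine mul_le_mul (hu_bd q) ?_ (abs_nonneg _) (by positivity)
          rw [abs_mul]
          exact mul_le_mul (hindb q) hq (abs_nonneg _) zero_le_one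
      have hfiber : ∫ q in {q | q.1 = j}, Z q * (gℓ (pp q) - mfun j) ∂P = 0 := by
        rw [← integral_indicator (hmA j)]
        have hind_eq : ∀ q : Fin r × Euc d × Euc K,
            ({q : Fin r × Euc d × Euc K | q.1 = j}).indicator
              (fun q => Z q * (gℓ (pp q) - mfun j)) q
            = indA q * (Z q * (gℓ (pp q) - mfun j)) := by
          intro q
          rw [hindA]
          by_cases hq : q.1 = j <;>
            simp [Set.indicator_apply, Set.mem_setOf_eq, Set.mem_preimage,
              Set.mem_singleton_iff, hq]
        calc ∫ q, ({q : Fin r × Euc d × Euc K | q.1 = j}).indicator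
              (fun q => Z q * (gℓ (pp q) - mfun j)) q ∂P
            = ∫ q, ((gℓ (pp q) - mfun j) * η (pp q) ℓ) * indA q
                - (gℓ (pp q) - mfun j) * (indA q * Y' q) ∂P := by
              refine integral_congr_ae (Filter.Eventually.of_forall fun q => ?_)
              rw [hind_eq q, hsplitZ q]
          _ = (∫ q, ((gℓ (pp q) - mfun j) * η (pp q) ℓ) * indA q ∂P)
              - ∫ q, (gℓ (pp q) - mfun j) * (indA q * Y' q) ∂P :=
              integral_sub hintZX1 hintZX2
          _ = (∫ q, ((gℓ (pp q) - mfun j) * η (pp q) ℓ) * c' q ∂P)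
              - ∫ q, (gℓ (pp q) - mfun j) * (c' q * η (pp q) ℓ) ∂P := by
              rw [hInta, hIntb]
          _ = 0 := by
              rw [sub_eq_zero]
              refine integral_congr_ae (Filter.Eventually.of_forall fun q => ?_)
              ring
      rw [hμAdef, ProbabilityTheory.cond, integral_smul_measure, ENNReal.toReal_inv,
        smul_eq_mul, hfiber, mul_zero]
    -- apply the multiplication constant property
    have hsgprod := hC.2 (Fin r × Euc d × Euc K) μA inferInstance
      (fun q => gℓ (pp q) - mfun j) Z (L' * Real.sqrt (c / d)) dΩ hXmeas hZmeas hXsg hXmean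
      hZXint0 hZbddA
    have hWae : ∀ᵐ q ∂μA, W q = Z q * (gℓ (pp q) - mfun j) := by
      filter_upwards [hj_ae] with q hq
      show Z q * (gℓ q.2.1 - mfun q.1) = Z q * (gℓ q.2.1 - mfun j)
      rw [hq]
    have h5 := hsgprod l
    rw [show (∫ a', (fun a => Z a * (gℓ (pp a) - mfun j)) a' ∂μA) = 0 from hZXint0] at h5
    simp only [sub_zero] at h5
    calc ∫ q, Real.exp (l * W q) ∂μA
        = ∫ q, Real.exp (l * (Z q * (gℓ (pp q) - mfun j))) ∂μA := by
          refine integral_congr_ae ?_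
          filter_upwards [hWae] with q hq
          rw [hq]
      _ ≤ Real.exp (l ^ 2 * (C * dΩ * (L' * Real.sqrt (c / d))) ^ 2 / 2) := h5
      _ ≤ Real.exp (l ^ 2 * s2 / 2) := by
          refine Real.exp_le_exp.mpr ?_
          have hsq : (Real.sqrt (c / d)) ^ 2 = c / d := Real.sq_sqrt (by positivity)
          have hmax : (max Lg 0) ^ 2 ≤ Lg ^ 2 := by
            rcases le_or_gt Lg 0 with h | h
            · rw [max_eq_right h]
              simpa using sq_nonneg Lg
            · rw [max_eq_left h.le]
          have hσ : (C * dΩ * (L' * Real.sqrt (c / d))) ^ 2 ≤ s2 := by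
            calc (C * dΩ * (L' * Real.sqrt (c / d))) ^ 2
                = C ^ 2 * dΩ ^ 2 * L ^ 2 * (max Lg 0) ^ 2 * ((Real.sqrt (c / d)) ^ 2) := by
                  rw [hL'def]; ring
              _ = C ^ 2 * dΩ ^ 2 * L ^ 2 * (max Lg 0) ^ 2 * (c / d) := by rw [hsq]
              _ ≤ C ^ 2 * dΩ ^ 2 * L ^ 2 * Lg ^ 2 * (c / d) := by
                  refine mul_le_mul_of_nonneg_right ?_ (by positivity)
                  refine mul_le_mul_of_nonneg_left hmax (by positivity)
              _ = s2 := by rw [hs2def]; ring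
          nlinarith [sq_nonneg l]
  -- single-sample MGF bound
  have hkey : ∀ l : ℝ, ∫ q, Real.exp (l * W q) ∂P ≤ Real.exp (l ^ 2 * s2 / 2) := by
    intro l
    have hsplit : ∫ q, Real.exp (l * W q) ∂P
        = ∑ j : Fin r, ∫ q in {q | q.1 = j}, Real.exp (l * W q) ∂P := by
      have hpt : ∀ q : Fin r × Euc d × Euc K, Real.exp (l * W q)
          = ∑ j : Fin r, ({q : Fin r × Euc d × Euc K | q.1 = j}).indicator
              (fun q => Real.exp (l * W q)) q := by
        intro q
        rw [Finset.sum_eq_single q.1]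
        · simp [Set.indicator_apply]
        · intro j _ hj
          apply Set.indicator_of_notMem
          exact fun h => hj (h ▸ rfl)
        · intro h
          exact absurd (Finset.mem_univ _) h
      calc ∫ q, Real.exp (l * W q) ∂P
          = ∫ q, ∑ j : Fin r, ({q : Fin r × Euc d × Euc K | q.1 = j}).indicator
              (fun q => Real.exp (l * W q)) q ∂P :=
            integral_congr_ae (Filter.Eventually.of_forall hpt)
        _ = ∑ j : Fin r, ∫ q, ({q : Fin r × Euc d × Euc K | q.1 = j}).indicator
              (fun q => Real.exp (l * W q)) q ∂P :=
            integral_finset_sum _ fun j _ => (hexpint l).indicator (hmA j)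
        _ = ∑ j : Fin r, ∫ q in {q | q.1 = j}, Real.exp (l * W q) ∂P :=
            Finset.sum_congr rfl fun j _ => integral_indicator (hmA j)
    rw [hsplit]
    have hterm : ∀ j : Fin r, ∫ q in {q | q.1 = j}, Real.exp (l * W q) ∂P
        ≤ (P {q | q.1 = j}).toReal * Real.exp (l ^ 2 * s2 / 2) := by
      intro j
      by_cases hPA : P {q | q.1 = j} = 0
      · rw [Measure.restrict_eq_zero.mpr hPA, integral_zero_measure]
        positivity
      · haveI : IsProbabilityMeasure (P[|{q | q.1 = j}]) := cond_isProbabilityMeasure hPA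
        have hcondint : ∫ q, Real.exp (l * W q) ∂(P[|{q | q.1 = j}])
            = (P {q | q.1 = j}).toReal⁻¹ * ∫ q in {q | q.1 = j}, Real.exp (l * W q) ∂P := by
          rw [ProbabilityTheory.cond, integral_smul_measure, ENNReal.toReal_inv, smul_eq_mul]
        have hPAtR : (P {q | q.1 = j}).toReal ≠ 0 := by
          simp [ENNReal.toReal_ne_zero, hPA, measure_ne_top]
        have heq : ∫ q in {q | q.1 = j}, Real.exp (l * W q) ∂P
            = (P {q | q.1 = j}).toReal * ∫ q, Real.exp (l * W q) ∂(P[|{q | q.1 = j}]) := by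
          rw [hcondint, ← mul_assoc, mul_inv_cancel₀ hPAtR, one_mul]
        rw [heq]
        exact mul_le_mul_of_nonneg_left (hMGFcond j hPA l) ENNReal.toReal_nonneg
    calc ∑ j : Fin r, ∫ q in {q | q.1 = j}, Real.exp (l * W q) ∂P
        ≤ ∑ j : Fin r, (P {q | q.1 = j}).toReal * Real.exp (l ^ 2 * s2 / 2) :=
          Finset.sum_le_sum fun j _ => hterm j
      _ = (∑ j : Fin r, (P {q | q.1 = j}).toReal) * Real.exp (l ^ 2 * s2 / 2) := by
          rw [← Finset.sum_mul]
      _ = 1 * Real.exp (l ^ 2 * s2 / 2) := by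
          congr 1
          have h1 : ∑ j : Fin r, P {q : Fin r × Euc d × Euc K | q.1 = j} = 1 := by
            have := sum_measure_preimage_singleton (μ := P) (s := Finset.univ)
              (f := fun q : Fin r × Euc d × Euc K => q.1) (fun j _ => hmA j)
            simp at this; exact this
          rw [← ENNReal.toReal_sum (fun j _ => measure_ne_top P _), h1, ENNReal.toReal_one]
      _ = Real.exp (l ^ 2 * s2 / 2) := one_mul _
  -- Chernoff bound
  set lam : ℝ := ε / s2 with hlamdef
  have hlampos : 0 < lam := div_pos hε hs2pos
  have hsingle : ∫ q, Real.exp (-lam * W q) ∂P ≤ Real.exp (lam ^ 2 * s2 / 2) := by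
    have h := hkey (-lam)
    simpa [neg_sq] using h
  haveI hpiprob : IsProbabilityMeasure (Measure.pi fun _ : Fin n => P) :=
    MeasureTheory.Measure.pi.instIsProbabilityMeasure _
  letI : MeasureSpace (Fin r × Euc d × Euc K) := ⟨P⟩
  haveI : SigmaFinite (volume : Measure (Fin r × Euc d × Euc K)) :=
    show SigmaFinite P by infer_instance
  have hprod : ∫ ω : Fin n → Fin r × Euc d × Euc K, ∏ i, Real.exp (-lam * W (ω i))
      ∂(Measure.pi fun _ : Fin n => P) = (∫ q, Real.exp (-lam * W q) ∂P) ^ n := by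
    have h := MeasureTheory.integral_fintype_prod_eq_pow (𝕜 := ℝ) (ι := Fin n) (μ := P)
      (fun q : Fin r × Euc d × Euc K => Real.exp (-lam * W q))
    rw [Fintype.card_fin] at h
    exact h
  have hFint : Integrable (fun ω : Fin n → Fin r × Euc d × Euc K =>
      ∏ i, Real.exp (-lam * W (ω i))) (Measure.pi fun _ : Fin n => P) :=
    Integrable.fintype_prod
      (f := fun _ : Fin n => fun q : Fin r × Euc d × Euc K => Real.exp (-lam * W q))
      (fun i => hexpint (-lam))
  set F : (Fin n → Fin r × Euc d × Euc K) → ℝ≥0∞ :=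
    fun ω => ENNReal.ofReal (∏ i, Real.exp (-lam * W (ω i))) with hFdef
  have hFmeas : Measurable F := by
    apply ENNReal.measurable_ofReal.comp
    exact Finset.measurable_prod Finset.univ fun i _ =>
      Real.measurable_exp.comp ((hWmeas.comp (measurable_pi_apply i)).const_mul (-lam))
  set a : ℝ≥0∞ := ENNReal.ofReal (Real.exp (lam * n * ε)) with hadef
  have ha0 : a ≠ 0 := by
    rw [hadef]
    simp [Real.exp_pos]
  have hatop : a ≠ ⊤ := ENNReal.ofReal_ne_top
  have hsub : {ω : Fin n → Fin r × Euc d × Euc K | (1 / (n : ℝ)) * ∑ i,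
      (-((ω i).2.2 ℓ - η ((ω i).2.1) ℓ)) *
        (gradient φ (f ((ω i).2.1)) ℓ -
          ∫ q, gradient φ (f q.2.1) ℓ ∂(P[|{q | q.1 = (ω i).1}])) ≤ -ε}
      ⊆ {ω | a ≤ F ω} := by
    intro ω hω
    have hω' : (1 / (n : ℝ)) * ∑ i, W (ω i) ≤ -ε := hω
    have hS : ∑ i, W (ω i) ≤ (n : ℝ) * -ε := by
      have h2 := mul_le_mul_of_nonneg_left hω' hnpos.le
      rw [← mul_assoc, mul_one_div, div_self hn0, one_mul] at h2
      exact h2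
    have h3 : lam * (n : ℝ) * ε ≤ ∑ i, -lam * W (ω i) := by
      rw [← Finset.mul_sum]
      calc lam * (n : ℝ) * ε = -lam * ((n : ℝ) * -ε) := by ring
        _ ≤ -lam * ∑ i, W (ω i) := by
            rw [neg_mul, neg_mul, neg_le_neg_iff]
            exact mul_le_mul_of_nonneg_left hS hlampos.le
    show a ≤ F ω
    rw [hadef, hFdef]
    refine ENNReal.ofReal_le_ofReal ?_
    calc Real.exp (lam * n * ε) ≤ Real.exp (∑ i, -lam * W (ω i)) := Real.exp_le_exp.mpr h3
      _ = ∏ i, Real.exp (-lam * W (ω i)) := Real.exp_sum _ _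
  refine le_trans (measure_mono hsub) ?_
  have hmarkov : (Measure.pi fun _ : Fin n => P) {ω | a ≤ F ω} ≤ a⁻¹ * ∫⁻ ω, F ω
      ∂(Measure.pi fun _ : Fin n => P) := by
    have h := mul_meas_ge_le_lintegral₀ (μ := Measure.pi fun _ : Fin n => P) hFmeas.aemeasurable a
    calc (Measure.pi fun _ : Fin n => P) {ω | a ≤ F ω}
        = a⁻¹ * (a * (Measure.pi fun _ : Fin n => P) {ω | a ≤ F ω}) := by
          rw [← mul_assoc, ENNReal.inv_mul_cancel ha0 hatop, one_mul]
      _ ≤ a⁻¹ * ∫⁻ ω, F ω ∂(Measure.pi fun _ : Fin n => P) := mul_le_mul_right h _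
  refine le_trans hmarkov ?_
  have hlint : ∫⁻ ω, F ω ∂(Measure.pi fun _ : Fin n => P)
      ≤ ENNReal.ofReal (Real.exp (lam ^ 2 * s2 / 2) ^ n) := by
    rw [hFdef]
    rw [← ofReal_integral_eq_lintegral_ofReal hFint
      (Filter.Eventually.of_forall fun ω => Finset.prod_nonneg fun i _ => (Real.exp_pos _).le)]
    refine ENNReal.ofReal_le_ofReal ?_
    rw [hprod]
    exact pow_le_pow_left₀ (integral_nonneg fun q => (Real.exp_pos _).le) hsingle n
  calc a⁻¹ * ∫⁻ ω, F ω ∂(Measure.pi fun _ : Fin n => P)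
      ≤ a⁻¹ * ENNReal.ofReal (Real.exp (lam ^ 2 * s2 / 2) ^ n) := mul_le_mul_right hlint _
    _ = ENNReal.ofReal (Real.exp (-(lam * n * ε))) *
        ENNReal.ofReal (Real.exp ((n : ℝ) * (lam ^ 2 * s2 / 2))) := by
        rw [hadef, ← ENNReal.ofReal_inv_of_pos (Real.exp_pos _), ← Real.exp_neg,
          ← Real.exp_nat_mul]
    _ = ENNReal.ofReal (Real.exp ((n : ℝ) * (lam ^ 2 * s2 / 2) - lam * n * ε)) := by
        rw [← ENNReal.ofReal_mul (Real.exp_pos _).le, ← Real.exp_add]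
        congr 1
        ring
    _ = ENNReal.ofReal (Real.exp (-(↑n * ↑d * ε ^ 2) / (2 * c * C ^ 2 * dΩ ^ 2 * L ^ 2 * Lg ^ 2))) := by
        congr 1
        rw [hlamdef, hs2def]
        field_simp
        ring
end
end

section
/- Let V₁, V₂, …, V_n be independent mean-zero random vectors in ℝ^d such that ‖V_i‖ ≤ b holds almost surely for each i. Then for every t ≥ 0, Pr[ ‖(1/n)Σ_{i=1}^n V_i‖ ≥ t ] ≤ 2·exp(−nt²/(16b²)). -/
open MeasureTheory ProbabilityTheory Real
open scoped ENNReal RealInnerProductSpace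

noncomputable section

lemma cosh_sqrt_hasSum {w : ℝ} (hw : 0 ≤ w) :
    HasSum (fun k : ℕ => w ^ k / (Nat.factorial (2 * k) : ℝ)) (Real.cosh (Real.sqrt w)) := by
  have := Real.hasSum_cosh (Real.sqrt w)
  simpa [pow_mul, Real.sq_sqrt hw] using this

lemma cosh_sqrt_combo {u v θ : ℝ} (hu : 0 ≤ u) (hv : 0 ≤ v) (h0 : 0 ≤ θ) (h1 : θ ≤ 1) :
    Real.cosh (Real.sqrt (θ * u + (1 - θ) * v)) ≤
      θ * Real.cosh (Real.sqrt u) + (1 - θ) * Real.cosh (Real.sqrt v) := by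
  have hw : 0 ≤ θ * u + (1 - θ) * v := by nlinarith
  have hL := cosh_sqrt_hasSum hw
  have hR := ((cosh_sqrt_hasSum hu).mul_left θ).add ((cosh_sqrt_hasSum hv).mul_left (1 - θ))
  refine hasSum_le (fun k => ?_) hL hR
  have hconv := (convexOn_pow k).2 (Set.mem_Ici.2 hu) (Set.mem_Ici.2 hv) h0 (sub_nonneg.2 h1)
    (by ring)
  simp only [smul_eq_mul] at hconv
  have hfac : (0:ℝ) < (Nat.factorial (2 * k) : ℝ) := by positivity
  rw [div_le_iff₀ hfac]
  have : θ * (u ^ k / (Nat.factorial (2 * k) : ℝ)) + (1 - θ) * (v ^ k / (Nat.factorial (2 * k) : ℝ))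
      = (θ * u ^ k + (1 - θ) * v ^ k) / (Nat.factorial (2 * k) : ℝ) := by ring
  rw [this, div_mul_cancel₀ _ hfac.ne']
  exact hconv

lemma cosh_norm_add_le {d : ℕ} {b : ℝ} (hb : 0 < b) (s v : EuclideanSpace ℝ (Fin d))
    (hv : ‖v‖ ≤ b) :
    Real.cosh ‖s + v‖ ≤ Real.cosh ‖s‖ * Real.cosh b
      + (Real.sinh ‖s‖ * Real.sinh b / (‖s‖ * b)) * ⟪s, v⟫ := by
  rcases eq_or_ne s 0 with rfl | hs
  · simp only [zero_add, norm_zero, Real.cosh_zero, Real.sinh_zero, one_mul, zero_mul,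
      inner_zero_left, mul_zero, zero_div, add_zero]
    rw [← Real.cosh_abs ‖v‖, abs_of_nonneg (norm_nonneg v), ← Real.cosh_abs b,
      abs_of_nonneg hb.le] at *
    exact Real.cosh_le_cosh.2 (by rw [abs_of_nonneg (norm_nonneg v), abs_of_nonneg hb.le]; exact hv)
  · set a := ‖s‖ with ha
    have ha0 : 0 < a := norm_pos_iff.2 hs
    set x : ℝ := ⟪s, v⟫ with hxdef
    have hab : 0 < a * b := mul_pos ha0 hb
    have hx : |x| ≤ a * b := by
      refine (abs_real_inner_le_norm s v).trans ?_
      exact mul_le_mul_of_nonneg_left hv ha0.le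
    set θ : ℝ := (1 + x / (a * b)) / 2 with hθdef
    have hx1 : -1 ≤ x / (a * b) := by
      rw [le_div_iff₀ hab]; nlinarith [abs_le.1 hx]
    have hx2 : x / (a * b) ≤ 1 := by
      rw [div_le_iff₀ hab]; nlinarith [abs_le.1 hx]
    have hθ0 : 0 ≤ θ := by rw [hθdef]; linarith
    have hθ1 : θ ≤ 1 := by rw [hθdef]; linarith
    have hcombo : θ * (a + b) ^ 2 + (1 - θ) * (a - b) ^ 2 = a ^ 2 + 2 * x + b ^ 2 := by
      rw [hθdef]; field_simp; ring
    have hsq : ‖s + v‖ ^ 2 ≤ θ * (a + b) ^ 2 + (1 - θ) * (a - b) ^ 2 := by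
      have hns := norm_add_sq_real s v
      have h2 : ‖v‖ ^ 2 ≤ b ^ 2 := by nlinarith [norm_nonneg v]
      rw [hcombo, hns]; rw [← ha, ← hxdef]; nlinarith
    have hnorm : ‖s + v‖ ≤ Real.sqrt (θ * (a + b) ^ 2 + (1 - θ) * (a - b) ^ 2) := by
      rw [← Real.sqrt_sq (norm_nonneg (s + v))]
      exact Real.sqrt_le_sqrt hsq
    have hch := cosh_sqrt_combo (u := (a + b) ^ 2) (v := (a - b) ^ 2)
      (by positivity) (by positivity) hθ0 hθ1
    rw [Real.sqrt_sq (by linarith : (0:ℝ) ≤ a + b), Real.sqrt_sq_eq_abs, Real.cosh_abs] at hch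
    calc Real.cosh ‖s + v‖
        ≤ Real.cosh (Real.sqrt (θ * (a + b) ^ 2 + (1 - θ) * (a - b) ^ 2)) := by
          refine Real.cosh_le_cosh.2 ?_
          rw [abs_of_nonneg (norm_nonneg _), abs_of_nonneg (Real.sqrt_nonneg _)]
          exact hnorm
      _ ≤ θ * Real.cosh (a + b) + (1 - θ) * Real.cosh (a - b) := hch
      _ = Real.cosh a * Real.cosh b + (Real.sinh a * Real.sinh b / (a * b)) * x := by
          rw [Real.cosh_add, Real.cosh_sub, hθdef]; field_simp; ring

lemma step_lemma {α : Type*} [MeasurableSpace α] (μ : Measure α) [IsProbabilityMeasure μ]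
    {d : ℕ} (X Y : α → EuclideanSpace ℝ (Fin d)) (hX : Measurable X) (hY : Measurable Y)
    (hind : IndepFun X Y μ) (hY0 : (∫ a, Y a ∂μ) = 0)
    {b B l : ℝ} (hb : 0 < b) (hl : 0 < l)
    (hYb : ∀ᵐ a ∂μ, ‖Y a‖ ≤ b) (hXB : ∀ᵐ a ∂μ, ‖X a‖ ≤ B) :
    ∫ a, Real.cosh (l * ‖X a + Y a‖) ∂μ ≤
      (∫ a, Real.cosh (l * ‖X a‖) ∂μ) * Real.cosh (l * b) := by
  set ξ : Measure (EuclideanSpace ℝ (Fin d)) := μ.map X with hξ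
  set η : Measure (EuclideanSpace ℝ (Fin d)) := μ.map Y with hη
  haveI : IsProbabilityMeasure ξ := Measure.isProbabilityMeasure_map hX.aemeasurable
  haveI : IsProbabilityMeasure η := Measure.isProbabilityMeasure_map hY.aemeasurable
  -- bundled function on the product
  set F : EuclideanSpace ℝ (Fin d) × EuclideanSpace ℝ (Fin d) → ℝ := fun p => Real.cosh (l * ‖p.1 + p.2‖) with hF
  have hFmeas : Measurable F := by
    apply Real.measurable_cosh.comp
    exact (measurable_const.mul ((measurable_fst.add measurable_snd).norm))
  have hprod : μ.map (fun a => (X a, Y a)) = ξ.prod η :=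
    (indepFun_iff_map_prod_eq_prod_map_map hX.aemeasurable hY.aemeasurable).1 hind
  -- integrability of F on the product measure
  have hbXY : ∀ᵐ a ∂μ, ‖X a‖ ≤ B ∧ ‖Y a‖ ≤ b := hXB.and hYb
  have hFcomp_int : Integrable (fun a => F (X a, Y a)) μ := by
    refine Integrable.mono' (integrable_const (Real.cosh (l * (B + b))))
      (hFmeas.comp (hX.prodMk hY)).aestronglyMeasurable ?_
    filter_upwards [hbXY] with a ha
    rw [Real.norm_eq_abs, abs_of_nonneg (Real.cosh_pos _).le]
    refine Real.cosh_le_cosh.2 ?_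
    have h1 : ‖X a + Y a‖ ≤ B + b := (norm_add_le _ _).trans (add_le_add ha.1 ha.2)
    have h0 : (0:ℝ) ≤ B := (norm_nonneg _).trans ha.1
    rw [abs_of_nonneg (by positivity), abs_of_nonneg (by positivity)]
    exact mul_le_mul_of_nonneg_left h1 hl.le
  have hFint : Integrable F (ξ.prod η) := by
    rw [← hprod]
    rwa [integrable_map_measure hFmeas.aestronglyMeasurable (hX.prodMk hY).aemeasurable]
  -- rewrite LHS as a double integral
  have hLHS : ∫ a, Real.cosh (l * ‖X a + Y a‖) ∂μ = ∫ x, ∫ y, F (x, y) ∂η ∂ξ := by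
    rw [← MeasureTheory.integral_prod F hFint, ← hprod,
      integral_map (hX.prodMk hY).aemeasurable hFmeas.aestronglyMeasurable]
  rw [hLHS]
  -- a.e. facts on η
  have hηb : ∀ᵐ y ∂η, ‖y‖ ≤ b := by
    rw [hη, ae_map_iff hY.aemeasurable (measurableSet_le (by fun_prop) measurable_const)]
    exact hYb
  have hηid_int : Integrable (fun y : EuclideanSpace ℝ (Fin d) => y) η := by
    refine Integrable.mono' (integrable_const b) aestronglyMeasurable_id ?_
    filter_upwards [hηb] with y hy using hy
  have hη0 : (∫ y, y ∂η) = 0 := by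
    rw [hη]
    exact (integral_map hY.aemeasurable aestronglyMeasurable_id).trans hY0
  -- inner integral bound, for every x
  have hinner : ∀ x : EuclideanSpace ℝ (Fin d),
      ∫ y, F (x, y) ∂η ≤ Real.cosh (l * ‖x‖) * Real.cosh (l * b) := by
    intro x
    set c : ℝ := Real.sinh ‖l • x‖ * Real.sinh (l * b) / (‖l • x‖ * (l * b)) * l with hc
    have hptwise : ∀ y : EuclideanSpace ℝ (Fin d), ‖y‖ ≤ b →
        F (x, y) ≤ Real.cosh (l * ‖x‖) * Real.cosh (l * b) + c * ⟪l • x, y⟫ := by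
      intro y hy
      have h1 : ‖l • y‖ ≤ l * b := by
        rw [norm_smul, Real.norm_eq_abs, abs_of_nonneg hl.le]
        exact mul_le_mul_of_nonneg_left hy hl.le
      have h2 := cosh_norm_add_le (mul_pos hl hb) (l • x) (l • y) h1
      rw [← smul_add, norm_smul, norm_smul, Real.norm_eq_abs, abs_of_nonneg hl.le,
        real_inner_smul_right] at h2
      calc F (x, y) ≤ Real.cosh (l * ‖x‖) * Real.cosh (l * b)
            + Real.sinh ‖l • x‖ * Real.sinh (l * b) / (‖l • x‖ * (l * b))
              * (l * ⟪l • x, y⟫) := by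
            simpa [norm_smul, abs_of_nonneg hl.le] using h2
        _ = Real.cosh (l * ‖x‖) * Real.cosh (l * b) + c * ⟪l • x, y⟫ := by
            rw [hc]; ring
    have hFx_int : Integrable (fun y => F (x, y)) η := by
      refine Integrable.mono' (integrable_const (Real.cosh (l * (‖x‖ + b))))
        ((hFmeas.comp (measurable_prodMk_left)).aestronglyMeasurable) ?_
      filter_upwards [hηb] with y hy
      rw [Real.norm_eq_abs, abs_of_nonneg (Real.cosh_pos _).le]
      refine Real.cosh_le_cosh.2 ?_
      have h1 : ‖x + y‖ ≤ ‖x‖ + b := (norm_add_le _ _).trans (by linarith)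
      rw [abs_of_nonneg (by positivity), abs_of_nonneg (by positivity)]
      exact mul_le_mul_of_nonneg_left h1 hl.le
    have hinner_int : Integrable (fun y : EuclideanSpace ℝ (Fin d) => ⟪l • x, y⟫) η :=
      hηid_int.const_inner (l • x)
    have hg_int : Integrable
        (fun y : EuclideanSpace ℝ (Fin d) =>
          Real.cosh (l * ‖x‖) * Real.cosh (l * b) + c * ⟪l • x, y⟫) η :=
      (integrable_const _).add (hinner_int.const_mul c)
    calc ∫ y, F (x, y) ∂η
        ≤ ∫ y, (Real.cosh (l * ‖x‖) * Real.cosh (l * b) + c * ⟪l • x, y⟫) ∂η := by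
          refine integral_mono_ae hFx_int hg_int ?_
          filter_upwards [hηb] with y hy using hptwise y hy
      _ = Real.cosh (l * ‖x‖) * Real.cosh (l * b) := by
          rw [integral_add (integrable_const _) (hinner_int.const_mul c),
            integral_const, integral_const_mul, integral_inner hηid_int, hη0,
            inner_zero_right, mul_zero, add_zero, probReal_univ, one_smul]
  -- outer integral
  have houter_int : Integrable (fun x => ∫ y, F (x, y) ∂η) ξ := hFint.integral_prod_left
  have hξB : ∀ᵐ x ∂ξ, ‖x‖ ≤ B := by
    rw [hξ, ae_map_iff hX.aemeasurable (measurableSet_le (by fun_prop) measurable_const)]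
    exact hXB
  have hRHS_int : Integrable
      (fun x : EuclideanSpace ℝ (Fin d) => Real.cosh (l * ‖x‖) * Real.cosh (l * b)) ξ := by
    refine Integrable.mono' (integrable_const (Real.cosh (l * B) * Real.cosh (l * b)))
      ((by fun_prop : Measurable fun x : EuclideanSpace ℝ (Fin d) =>
        Real.cosh (l * ‖x‖) * Real.cosh (l * b)).aestronglyMeasurable) ?_
    filter_upwards [hξB] with x hx
    rw [Real.norm_eq_abs, abs_of_nonneg (by positivity)]
    refine mul_le_mul_of_nonneg_right ?_ (Real.cosh_pos _).le
    refine Real.cosh_le_cosh.2 ?_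
    have h0 : (0:ℝ) ≤ B := (norm_nonneg _).trans hx
    rw [abs_of_nonneg (by positivity), abs_of_nonneg (by positivity)]
    exact mul_le_mul_of_nonneg_left hx hl.le
  calc ∫ x, ∫ y, F (x, y) ∂η ∂ξ
      ≤ ∫ x, Real.cosh (l * ‖x‖) * Real.cosh (l * b) ∂ξ :=
        integral_mono houter_int hRHS_int hinner
    _ = (∫ x, Real.cosh (l * ‖x‖) ∂ξ) * Real.cosh (l * b) := by
        rw [integral_mul_const]
    _ = (∫ a, Real.cosh (l * ‖X a‖) ∂μ) * Real.cosh (l * b) := by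
        rw [hξ, integral_map hX.aemeasurable]
        exact (Real.measurable_cosh.comp
          (measurable_const.mul measurable_norm)).aestronglyMeasurable

lemma cosh_sum_bound {α : Type*} [MeasurableSpace α] (μ : Measure α) [IsProbabilityMeasure μ]
    {d n : ℕ} (V : Fin n → α → EuclideanSpace ℝ (Fin d)) {b l : ℝ} (hb : 0 < b) (hl : 0 < l)
    (hmeas : ∀ i, Measurable (V i))
    (hindep : iIndepFun V μ)
    (hmean : ∀ i, (∫ a, V i a ∂μ) = 0)
    (hbdd : ∀ i, ∀ᵐ a ∂μ, ‖V i a‖ ≤ b)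
    (s : Finset (Fin n)) :
    ∫ a, Real.cosh (l * ‖∑ i ∈ s, V i a‖) ∂μ ≤ Real.cosh (l * b) ^ s.card := by
  classical
  induction s using Finset.induction_on with
  | empty => simp
  | @insert j s hj ih =>
    have hXmeas : Measurable (fun a => ∑ i ∈ s, V i a) := by
      exact Finset.measurable_sum s fun i _ => hmeas i
    have hXB : ∀ᵐ a ∂μ, ‖∑ i ∈ s, V i a‖ ≤ (s.card : ℝ) * b := by
      have hall : ∀ᵐ a ∂μ, ∀ i ∈ s, ‖V i a‖ ≤ b :=
        (ae_ball_iff s.countable_toSet).2 fun i _ => hbdd i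
      filter_upwards [hall] with a ha
      calc ‖∑ i ∈ s, V i a‖ ≤ ∑ i ∈ s, ‖V i a‖ := norm_sum_le _ _
        _ ≤ ∑ _i ∈ s, b := Finset.sum_le_sum ha
        _ = (s.card : ℝ) * b := by rw [Finset.sum_const, nsmul_eq_mul]
    have hind : IndepFun (fun a => ∑ i ∈ s, V i a) (V j) μ := by
      have := hindep.indepFun_finsetSum_of_notMem hmeas hj
      have heq : (∑ i ∈ s, V i) = fun a => ∑ i ∈ s, V i a := by
        ext1 a; simp [Finset.sum_apply]
      rwa [heq] at this
    have hstep := step_lemma μ (fun a => ∑ i ∈ s, V i a) (V j) hXmeas (hmeas j)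
      hind (hmean j) hb hl (hbdd j) hXB
    calc ∫ a, Real.cosh (l * ‖∑ i ∈ insert j s, V i a‖) ∂μ
        = ∫ a, Real.cosh (l * ‖(∑ i ∈ s, V i a) + V j a‖) ∂μ := by
          congr 1; ext a; rw [Finset.sum_insert hj, add_comm]
      _ ≤ (∫ a, Real.cosh (l * ‖∑ i ∈ s, V i a‖) ∂μ) * Real.cosh (l * b) := hstep
      _ ≤ Real.cosh (l * b) ^ s.card * Real.cosh (l * b) :=
          mul_le_mul_of_nonneg_right ih (Real.cosh_pos _).le
      _ = Real.cosh (l * b) ^ (insert j s).card := by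
          rw [Finset.card_insert_of_notMem hj, pow_succ]

/-- **Vector-valued Hoeffding-type inequality.** If `V₁, …, Vₙ` are independent mean-zero
random vectors in `ℝ^d` with `‖Vᵢ‖ ≤ b` almost surely, then for every `t ≥ 0`,
`Pr[‖(1/n) ∑ Vᵢ‖ ≥ t] ≤ 2 exp(−n t² / (16 b²))`. -/
theorem vector_hoeffding {α : Type*} [MeasurableSpace α] (μ : Measure α)
    [IsProbabilityMeasure μ] (d n : ℕ) (V : Fin n → α → Euc d) (b : ℝ)
    (hmeas : ∀ i, Measurable (V i))
    (hindep : iIndepFun V μ)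
    (hmean : ∀ i, (∫ a, V i a ∂μ) = 0)
    (hbdd : ∀ i, ∀ᵐ a ∂μ, ‖V i a‖ ≤ b)
    (t : ℝ) (ht : 0 ≤ t) :
    μ {a | t ≤ ‖(1 / (n : ℝ)) • ∑ i, V i a‖} ≤
      ENNReal.ofReal (2 * Real.exp (-(n * t ^ 2) / (16 * b ^ 2))) := by
  classical
  have htriv : ∀ r : ℝ, r = 0 →
      μ {a | t ≤ ‖(1 / (n : ℝ)) • ∑ i, V i a‖} ≤ ENNReal.ofReal (2 * Real.exp r) := by
    intro r hr
    rw [hr, Real.exp_zero, mul_one]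
    calc μ _ ≤ 1 := prob_le_one
      _ ≤ ENNReal.ofReal 2 := by
          rw [← ENNReal.ofReal_one]
          exact ENNReal.ofReal_le_ofReal one_le_two
  rcases Nat.eq_zero_or_pos n with hn | hn
  · subst hn
    exact htriv _ (by norm_num)
  rcases le_or_gt b 0 with hb | hb
  · rcases hb.lt_or_eq with hb' | hb'
    · exfalso
      haveI : (ae μ).NeBot := MeasureTheory.ae_neBot.2 (IsProbabilityMeasure.ne_zero μ)
      obtain ⟨a, ha⟩ := (hbdd ⟨0, hn⟩).exists
      linarith [norm_nonneg (V ⟨0, hn⟩ a)]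
    · exact htriv _ (by rw [hb']; norm_num)
  rcases ht.eq_or_lt with ht0 | ht0
  · exact htriv _ (by rw [← ht0]; norm_num)
  -- main case : 0 < b, 0 < t, 0 < n
  set S : α → EuclideanSpace ℝ (Fin d) := fun a => ∑ i, V i a with hS
  have hSmeas : Measurable S := Finset.measurable_sum _ fun i _ => hmeas i
  have hnpos : (0:ℝ) < n := Nat.cast_pos.2 hn
  have hset : {a | t ≤ ‖(1 / (n : ℝ)) • ∑ i, V i a‖} = {a | (n:ℝ) * t ≤ ‖S a‖} := by
    ext a
    show t ≤ ‖(1 / (n : ℝ)) • S a‖ ↔ (n:ℝ) * t ≤ ‖S a‖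
    rw [norm_smul, Real.norm_eq_abs, one_div, abs_of_nonneg (inv_nonneg.2 hnpos.le),
      ← div_eq_inv_mul, le_div_iff₀ hnpos, mul_comm]
  rw [hset]
  set l : ℝ := t / b ^ 2 with hl
  have hlpos : 0 < l := by positivity
  have hSbdd : ∀ᵐ a ∂μ, ‖S a‖ ≤ (n:ℝ) * b := by
    have hall : ∀ᵐ a ∂μ, ∀ i, ‖V i a‖ ≤ b := ae_all_iff.2 hbdd
    filter_upwards [hall] with a ha
    calc ‖S a‖ ≤ ∑ i, ‖V i a‖ := norm_sum_le _ _
      _ ≤ ∑ _i : Fin n, b := Finset.sum_le_sum fun i _ => ha i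
      _ = (n:ℝ) * b := by rw [Finset.sum_const, nsmul_eq_mul, Finset.card_univ, Fintype.card_fin]
  have hexp_int : Integrable (fun a => Real.exp (l * ‖S a‖)) μ := by
    refine Integrable.mono' (integrable_const (Real.exp (l * ((n:ℝ) * b))))
      ((Real.measurable_exp.comp (measurable_const.mul hSmeas.norm)).aestronglyMeasurable) ?_
    filter_upwards [hSbdd] with a ha
    rw [Real.norm_eq_abs, abs_of_nonneg (Real.exp_pos _).le, Real.exp_le_exp]
    exact mul_le_mul_of_nonneg_left ha hlpos.le
  have hcosh_int : Integrable (fun a => Real.cosh (l * ‖S a‖)) μ := by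
    refine Integrable.mono' (integrable_const (Real.cosh (l * ((n:ℝ) * b))))
      ((Real.measurable_cosh.comp (measurable_const.mul hSmeas.norm)).aestronglyMeasurable) ?_
    filter_upwards [hSbdd] with a ha
    rw [Real.norm_eq_abs, abs_of_nonneg (Real.cosh_pos _).le]
    refine Real.cosh_le_cosh.2 ?_
    rw [abs_of_nonneg (by positivity), abs_of_nonneg (by positivity)]
    exact mul_le_mul_of_nonneg_left ha hlpos.le
  -- Chernoff bound
  have hchern := measure_ge_le_exp_mul_mgf (X := fun a => ‖S a‖) (μ := μ) (t := l)
    ((n:ℝ) * t) hlpos.le hexp_int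
  -- bound the mgf
  have hmgf : mgf (fun a => ‖S a‖) μ l ≤ 2 * Real.exp ((n:ℝ) * (l * b) ^ 2 / 2) := by
    have h1 : mgf (fun a => ‖S a‖) μ l ≤ ∫ a, 2 * Real.cosh (l * ‖S a‖) ∂μ := by
      refine integral_mono hexp_int (hcosh_int.const_mul 2) fun a => ?_
      rw [Real.cosh_eq]
      have := Real.exp_pos (-(l * ‖S a‖))
      linarith
    have h2 : ∫ a, 2 * Real.cosh (l * ‖S a‖) ∂μ ≤ 2 * Real.cosh (l * b) ^ n := by
      rw [integral_const_mul]
      have := cosh_sum_bound μ V hb hlpos hmeas hindep hmean hbdd Finset.univ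
      rw [Finset.card_univ, Fintype.card_fin] at this
      linarith
    have h3 : Real.cosh (l * b) ^ n ≤ Real.exp ((n:ℝ) * (l * b) ^ 2 / 2) := by
      calc Real.cosh (l * b) ^ n ≤ Real.exp ((l * b) ^ 2 / 2) ^ n :=
            pow_le_pow_left₀ (Real.cosh_pos _).le (Real.cosh_le_exp_half_sq _) n
        _ = Real.exp ((n:ℝ) * (l * b) ^ 2 / 2) := by
            rw [← Real.exp_nat_mul]; ring_nf
    linarith
  have hfinal : (μ {a | (n:ℝ) * t ≤ ‖S a‖}).toReal ≤
      2 * Real.exp (-(n * t ^ 2) / (16 * b ^ 2)) := by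
    refine hchern.trans ?_
    refine (mul_le_mul_of_nonneg_left hmgf (Real.exp_pos _).le).trans ?_
    rw [mul_comm, mul_assoc, ← Real.exp_add]
    have harg : (n:ℝ) * (l * b) ^ 2 / 2 + -l * ((n:ℝ) * t) ≤ -(↑n * t ^ 2) / (16 * b ^ 2) := by
      rw [hl]
      have hb2 : (0:ℝ) < b ^ 2 := by positivity
      have hnn : (0:ℝ) ≤ (n:ℝ) * t ^ 2 := by positivity
      field_simp
      nlinarith [mul_nonneg hnn hb2.le, sq_nonneg t, sq_nonneg b]
    have := Real.exp_le_exp.2 harg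
    linarith [Real.exp_pos (-(↑n * t ^ 2) / (16 * b ^ 2))]
  rw [← ENNReal.ofReal_toReal (measure_ne_top μ _)]
  exact ENNReal.ofReal_le_ofReal hfinal
end
end

section
/- Let Ω ⊆ ℝ^K be compact convex, φ: Ω → ℝ strictly convex and continuously differentiable, and let (X, Y) be random variables with X in ℝ^d and Y taking values in Ω almost surely. Then for every measurable f: ℝ^d → Ω, E[D_φ(Y, f(X))] ≥ E[D_φ(Y, E[Y|X])]; that is, the conditional expectation E[Y|X] minimizes the expected Bregman divergence loss among all measurable functions of X. -/
open MeasureTheory ProbabilityTheory Real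
open scoped ENNReal RealInnerProductSpace

noncomputable section

set_option linter.unusedVariables false

lemma breg_nonneg {K : ℕ} {Ω : Set (Euc K)}
    {φ : Euc K → ℝ} (hφ : ConvexOn ℝ Ω φ) (hφd : ContDiff ℝ 1 φ)
    {x y : Euc K} (hx : x ∈ Ω) (hy : y ∈ Ω) : 0 ≤ breg φ x y := by
  set A : ℝ →ᵃ[ℝ] Euc K := AffineMap.lineMap y x with hA
  have hAeq : ∀ t : ℝ, A t = t • (x - y) + y := fun t => by
    rw [hA, AffineMap.lineMap_apply_module]; module
  have hline : HasDerivAt (A : ℝ → Euc K) (x - y) 0 := by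
    have : HasDerivAt (fun t : ℝ => t • (x - y) + y) (x - y) 0 := by
      simpa using ((hasDerivAt_id (0:ℝ)).smul_const (x - y)).add_const y
    exact this.congr_of_eventuallyEq (by filter_upwards with t; rw [hAeq])
  have hgd : HasDerivAt (φ ∘ A) ((fderiv ℝ φ y) (x - y)) 0 := by
    have hφy : HasFDerivAt φ (fderiv ℝ φ y) (A 0) := by
      rw [hAeq]; simpa using ((hφd.differentiable one_ne_zero) _).hasFDerivAt
    exact hφy.comp_hasDerivAt 0 hline
  have hconv : ConvexOn ℝ (A ⁻¹' Ω) (φ ∘ A) := hφ.comp_affineMap A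
  have h0 : (0:ℝ) ∈ A ⁻¹' Ω := by simp [Set.mem_preimage, hA, hy]
  have h1 : (1:ℝ) ∈ A ⁻¹' Ω := by simp [Set.mem_preimage, hA, hx]
  have hs := hconv.le_slope_of_hasDerivAt h0 h1 zero_lt_one hgd
  have hslope : slope (φ ∘ A) 0 1 = φ x - φ y := by
    simp [slope_def_field, hAeq]
  have hgrad : ⟪gradient φ y, x - y⟫ = (fderiv ℝ φ y) (x - y) := by
    simp [gradient, real_inner_comm]
  rw [hslope] at hs
  rw [breg, hgrad]
  linarith

lemma coord_abs_le_norm {K : ℕ} (x : Euc K) (i : Fin K) : |x i| ≤ ‖x‖ := by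
  have h : |x i| = Real.sqrt (‖x i‖ ^ 2) := by
    rw [Real.sqrt_sq_eq_abs, Real.norm_eq_abs, abs_abs]
  rw [h, EuclideanSpace.norm_eq]
  exact Real.sqrt_le_sqrt (Finset.single_le_sum (f := fun j => ‖x j‖ ^ 2) (fun j _ => sq_nonneg _) (Finset.mem_univ i))

lemma key_integral {d K : ℕ} {α : Type*} [mα : MeasurableSpace α]
    (μ : Measure α) [IsProbabilityMeasure μ]
    {X : α → Euc d} {Y : α → Euc K} (hX : Measurable X) (hY : Measurable Y)
    {R : ℝ} (hYbdd : ∀ᵐ a ∂μ, ‖Y a‖ ≤ R)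
    {η : Euc d → Euc K} (hη : Measurable η)
    (hver : (fun a => η (X a)) =ᵐ[μ] μ[Y | MeasurableSpace.comap X inferInstance])
    {Rη : ℝ} (hηbdd : ∀ x, ‖η x‖ ≤ Rη)
    (G : Euc d → Euc K) (hG : Measurable G) {C : ℝ} (hGbdd : ∀ x, ‖G x‖ ≤ C) :
    ∫ a, ⟪G (X a), Y a⟫ ∂μ = ∫ a, ⟪G (X a), η (X a)⟫ ∂μ := by
  have hm : MeasurableSpace.comap X inferInstance ≤ mα := hX.comap_le
  haveI : SigmaFinite (μ.trim hm) := inferInstance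
  have hXm : Measurable[MeasurableSpace.comap X inferInstance] X := measurable_iff_comap_le.mpr le_rfl
  -- integrability of Y
  have hYint : Integrable Y μ :=
    (integrable_const R).mono' (hY.aestronglyMeasurable) hYbdd
  -- integrability of η ∘ X
  have hηXm : Measurable[MeasurableSpace.comap X inferInstance] fun a => η (X a) := hη.comp hXm
  have hηXint : Integrable (fun a => η (X a)) μ :=
    (integrable_const Rη).mono' ((hη.comp hX).aestronglyMeasurable)
      (Filter.Eventually.of_forall fun a => hηbdd _)
  -- coordinatewise
  have hcoord : ∀ i : Fin K,
      ∫ a, G (X a) i * Y a i ∂μ = ∫ a, G (X a) i * η (X a) i ∂μ := by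
    intro i
    set Z : α → ℝ := fun a => G (X a) i with hZdef
    set W : α → ℝ := fun a => Y a i with hWdef
    have hprojm : Measurable fun x : Euc K => x i :=
      (EuclideanSpace.proj (𝕜 := ℝ) i).continuous.measurable
    have hZm : Measurable[MeasurableSpace.comap X inferInstance] Z := (hprojm.comp hG).comp hXm
    have hZsm : StronglyMeasurable[MeasurableSpace.comap X inferInstance] Z := hZm.stronglyMeasurable
    have hZbdd : ∀ a, |Z a| ≤ C := fun a => (coord_abs_le_norm _ i).trans (hGbdd _)
    have hWint : Integrable W μ := by
      refine (integrable_const R).mono' ((hprojm.comp hY).aestronglyMeasurable) ?_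
      filter_upwards [hYbdd] with a ha
      exact (coord_abs_le_norm _ i).trans ha
    -- Step A: η X i is a version of μ[W|MeasurableSpace.comap X inferInstance]
    have hA : (fun a => η (X a) i) =ᵐ[μ] μ[W|MeasurableSpace.comap X inferInstance] := by
      refine ae_eq_condExp_of_forall_setIntegral_eq hm hWint ?_ ?_ ?_
      · intro s _ _
        refine ((integrable_const Rη).restrict (s := s)).mono'
          ((hprojm.comp (hη.comp hX)).aestronglyMeasurable) ?_
        exact Filter.Eventually.of_forall fun a => (coord_abs_le_norm _ i).trans (hηbdd _)
      · intro s hs hμs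
        have h1 := ContinuousLinearMap.integral_comp_comm (EuclideanSpace.proj (𝕜 := ℝ) i)
          (hηXint.restrict (s := s))
        have h3 := ContinuousLinearMap.integral_comp_comm (EuclideanSpace.proj (𝕜 := ℝ) i)
          (hYint.restrict (s := s))
        simp only [PiLp.proj_apply] at h1 h3
        have h2 : ∫ a in s, η (X a) ∂μ = ∫ a in s, Y a ∂μ := by
          rw [integral_congr_ae (ae_restrict_of_ae hver)]
          exact setIntegral_condExp hm hYint hs
        rw [show W = fun a => Y a i from rfl, h1,
          show (∫ x in s, (fun a => Y a i) x ∂μ) = ∫ x in s, Y x i ∂μ from rfl, h3]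
        exact congrArg (fun v => v i) h2
      · exact StronglyMeasurable.aestronglyMeasurable (hprojm.comp hηXm).stronglyMeasurable
    -- Step B: pull-out
    have hZWint : Integrable (Z * W) μ :=
      hWint.bdd_mul ((hZm.mono hm le_rfl).aestronglyMeasurable)
        (Filter.Eventually.of_forall hZbdd)
    have hpull : μ[Z * W|MeasurableSpace.comap X inferInstance] =ᵐ[μ] Z * μ[W|MeasurableSpace.comap X inferInstance] :=
      condExp_mul_of_stronglyMeasurable_left hZsm hZWint hWint
    calc ∫ a, G (X a) i * Y a i ∂μ = ∫ a, (Z * W) a ∂μ := rfl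
      _ = ∫ a, (μ[Z * W|MeasurableSpace.comap X inferInstance]) a ∂μ := (integral_condExp hm).symm
      _ = ∫ a, (Z * μ[W|MeasurableSpace.comap X inferInstance]) a ∂μ := integral_congr_ae hpull
      _ = ∫ a, Z a * η (X a) i ∂μ := by
          refine integral_congr_ae ?_
          filter_upwards [hA] with a ha
          simp [Pi.mul_apply, ← ha]
      _ = ∫ a, G (X a) i * η (X a) i ∂μ := rfl
  -- assemble
  have hexp : ∀ (u v : Euc K), ⟪u, v⟫ = ∑ i, u i * v i := fun u v => by
    simp [PiLp.inner_apply, RCLike.inner_apply, conj_trivial, mul_comm]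
  have hint1 : ∀ i : Fin K, Integrable (fun a => G (X a) i * Y a i) μ := by
    intro i
    have hWint : Integrable (fun a => Y a i) μ := by
      refine (integrable_const R).mono'
        (((EuclideanSpace.proj (𝕜 := ℝ) i).continuous.measurable.comp hY).aestronglyMeasurable) ?_
      filter_upwards [hYbdd] with a ha
      exact (coord_abs_le_norm _ i).trans ha
    refine hWint.bdd_mul (c := C)
      (((EuclideanSpace.proj (𝕜 := ℝ) i).continuous.measurable.comp
        (hG.comp hX)).aestronglyMeasurable) ?_
    exact Filter.Eventually.of_forall fun a => (coord_abs_le_norm _ i).trans (hGbdd _)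
  have hint2 : ∀ i : Fin K, Integrable (fun a => G (X a) i * η (X a) i) μ := by
    intro i
    have hWint : Integrable (fun a => η (X a) i) μ := by
      refine (integrable_const Rη).mono'
        (((EuclideanSpace.proj (𝕜 := ℝ) i).continuous.measurable.comp
          (hη.comp hX)).aestronglyMeasurable) ?_
      exact Filter.Eventually.of_forall fun a => (coord_abs_le_norm _ i).trans (hηbdd _)
    refine hWint.bdd_mul (c := C)
      (((EuclideanSpace.proj (𝕜 := ℝ) i).continuous.measurable.comp
        (hG.comp hX)).aestronglyMeasurable) ?_
    exact Filter.Eventually.of_forall fun a => (coord_abs_le_norm _ i).trans (hGbdd _)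
  calc ∫ a, ⟪G (X a), Y a⟫ ∂μ = ∫ a, ∑ i, G (X a) i * Y a i ∂μ := by simp only [hexp]
    _ = ∑ i, ∫ a, G (X a) i * Y a i ∂μ := integral_finset_sum _ fun i _ => hint1 i
    _ = ∑ i, ∫ a, G (X a) i * η (X a) i ∂μ := Finset.sum_congr rfl fun i _ => hcoord i
    _ = ∫ a, ∑ i, G (X a) i * η (X a) i ∂μ := (integral_finset_sum _ fun i _ => hint2 i).symm
    _ = ∫ a, ⟪G (X a), η (X a)⟫ ∂μ := by simp only [hexp]

/-- **The conditional expectation minimizes the expected Bregman loss**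
among all measurable predictors of the form `f ∘ X`. -/
theorem condexp_minimizes_bregman (d K : ℕ) {α : Type*} [MeasurableSpace α]
    (μ : Measure α) [IsProbabilityMeasure μ]
    (Ω : Set (Euc K)) (hΩc : IsCompact Ω) (hΩconv : Convex ℝ Ω)
    (φ : Euc K → ℝ) (hφ : StrictConvexOn ℝ Ω φ) (hφd : ContDiff ℝ 1 φ)
    (X : α → Euc d) (Y : α → Euc K) (hX : Measurable X) (hY : Measurable Y)
    (hYΩ : ∀ᵐ a ∂μ, Y a ∈ Ω)
    (η : Euc d → Euc K) (hη : Measurable η) (hηΩ : ∀ x, η x ∈ Ω)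
    (hver : (fun a => η (X a)) =ᵐ[μ] μ[Y | MeasurableSpace.comap X inferInstance])
    (f : Euc d → Euc K) (hf : Measurable f) (hfΩ : ∀ x, f x ∈ Ω) :
    ∫ a, breg φ (Y a) (η (X a)) ∂μ ≤ ∫ a, breg φ (Y a) (f (X a)) ∂μ := by
  -- bounds
  obtain ⟨R, hR⟩ : ∃ R : ℝ, ∀ z ∈ Ω, ‖z‖ ≤ R :=
    isBounded_iff_forall_norm_le.mp hΩc.isBounded
  have hgc : Continuous (gradient φ) := by
    have h1 : Continuous (fderiv ℝ φ) := hφd.continuous_fderiv one_ne_zero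
    exact (InnerProductSpace.toDual ℝ (Euc K)).symm.continuous.comp h1
  obtain ⟨Cg, hCg⟩ : ∃ C : ℝ, ∀ z ∈ Ω, ‖gradient φ z‖ ≤ C :=
    hΩc.exists_bound_of_continuousOn hgc.continuousOn
  obtain ⟨Cφ, hCφ⟩ : ∃ C : ℝ, ∀ z ∈ Ω, ‖φ z‖ ≤ C :=
    hΩc.exists_bound_of_continuousOn hφd.continuous.continuousOn
  have hCg0 : 0 ≤ Cg := le_trans (norm_nonneg _) (hCg _ (hηΩ (0 : Euc d)))
  have hR0 : 0 ≤ R := le_trans (norm_nonneg _) (hR _ (hηΩ (0 : Euc d)))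
  have hRY : ∀ᵐ a ∂μ, ‖Y a‖ ≤ R := hYΩ.mono fun a ha => hR _ ha
  have hRη : ∀ x, ‖η x‖ ≤ R := fun x => hR _ (hηΩ x)
  have hφm : Measurable φ := hφd.continuous.measurable
  have hgm : Measurable (gradient φ) := hgc.measurable
  -- key applications
  set G : Euc d → Euc K := fun x => gradient φ (η x) - gradient φ (f x) with hGdef
  have hGmeas : Measurable G := (hgm.comp hη).sub (hgm.comp hf)
  have hGb : ∀ x, ‖G x‖ ≤ Cg + Cg := fun x =>
    (norm_sub_le _ _).trans (add_le_add (hCg _ (hηΩ x)) (hCg _ (hfΩ x)))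
  have k1 : ∫ a, ⟪G (X a), Y a⟫ ∂μ = ∫ a, ⟪G (X a), η (X a)⟫ ∂μ :=
    key_integral μ hX hY hRY hη hver hRη G hGmeas hGb
  -- generic integrability of breg compositions
  have key_int : ∀ (u v : α → Euc K), Measurable u → Measurable v →
      (∀ᵐ a ∂μ, u a ∈ Ω) → (∀ a, v a ∈ Ω) →
      Integrable (fun a => breg φ (u a) (v a)) μ := by
    intro u v hu hv huΩ hvΩ
    have hmeas : Measurable fun a => breg φ (u a) (v a) := by
      unfold breg
      exact ((hφm.comp hu).sub (hφm.comp hv)).sub ((hgm.comp hv).inner (hu.sub hv))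
    refine (integrable_const (Cφ + Cφ + Cg * (R + R))).mono' hmeas.aestronglyMeasurable ?_
    filter_upwards [huΩ] with a ha
    have h1 : |φ (u a)| ≤ Cφ := hCφ _ ha
    have h2 : |φ (v a)| ≤ Cφ := hCφ _ (hvΩ a)
    have h3 : |⟪gradient φ (v a), u a - v a⟫| ≤ Cg * (R + R) := by
      refine (abs_real_inner_le_norm _ _).trans ?_
      have hn : ‖u a - v a‖ ≤ R + R :=
        (norm_sub_le _ _).trans (add_le_add (hR _ ha) (hR _ (hvΩ a)))
      exact mul_le_mul (hCg _ (hvΩ a)) hn (norm_nonneg _) hCg0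
    rw [Real.norm_eq_abs]
    unfold breg
    calc |φ (u a) - φ (v a) - ⟪gradient φ (v a), u a - v a⟫|
        ≤ |φ (u a)| + |φ (v a)| + |⟪gradient φ (v a), u a - v a⟫| := by
          exact (abs_sub _ _).trans (add_le_add_left (abs_sub _ _) _)
      _ ≤ Cφ + Cφ + Cg * (R + R) := by linarith
  have I1 : Integrable (fun a => breg φ (Y a) (f (X a))) μ :=
    key_int Y (fun a => f (X a)) hY (hf.comp hX) hYΩ (fun a => hfΩ _)
  have I2 : Integrable (fun a => breg φ (Y a) (η (X a))) μ :=
    key_int Y (fun a => η (X a)) hY (hη.comp hX) hYΩ (fun a => hηΩ _)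
  have I3 : Integrable (fun a => breg φ (η (X a)) (f (X a))) μ :=
    key_int (fun a => η (X a)) (fun a => f (X a)) (hη.comp hX) (hf.comp hX)
      (Filter.Eventually.of_forall fun a => hηΩ _) (fun a => hfΩ _)
  have hinnerint : ∀ (w : α → Euc K), Measurable w → (∀ᵐ a ∂μ, ‖w a‖ ≤ R) →
      Integrable (fun a => ⟪G (X a), w a⟫) μ := by
    intro w hw hwb
    refine (integrable_const ((Cg + Cg) * R)).mono'
      (((hGmeas.comp hX).inner hw).aestronglyMeasurable) ?_
    filter_upwards [hwb] with a ha
    rw [Real.norm_eq_abs]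
    exact (abs_real_inner_le_norm _ _).trans
      (mul_le_mul (hGb _) ha (norm_nonneg _) (by linarith))
  have I4 : Integrable (fun a => ⟪G (X a), Y a⟫) μ := hinnerint Y hY hRY
  have I5 : Integrable (fun a => ⟪G (X a), η (X a)⟫) μ :=
    hinnerint (fun a => η (X a)) (hη.comp hX) (Filter.Eventually.of_forall fun a => hRη _)
  -- pointwise identity
  have hD : ∀ a, breg φ (Y a) (f (X a)) - breg φ (Y a) (η (X a))
      = breg φ (η (X a)) (f (X a)) + (⟪G (X a), Y a⟫ - ⟪G (X a), η (X a)⟫) := by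
    intro a
    simp only [breg, hGdef, inner_sub_left, inner_sub_right]
    ring
  have hsub : ∫ a, breg φ (Y a) (f (X a)) ∂μ - ∫ a, breg φ (Y a) (η (X a)) ∂μ
      = ∫ a, breg φ (η (X a)) (f (X a)) ∂μ := by
    rw [← integral_sub I1 I2]
    calc ∫ a, (breg φ (Y a) (f (X a)) - breg φ (Y a) (η (X a))) ∂μ
        = ∫ a, (breg φ (η (X a)) (f (X a))
            + (⟪G (X a), Y a⟫ - ⟪G (X a), η (X a)⟫)) ∂μ := by
          exact integral_congr_ae (Filter.Eventually.of_forall hD)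
      _ = ∫ a, breg φ (η (X a)) (f (X a)) ∂μ
            + (∫ a, ⟪G (X a), Y a⟫ ∂μ - ∫ a, ⟪G (X a), η (X a)⟫ ∂μ) := by
          have h := integral_add I3 (I4.sub I5)
          simp only [Pi.sub_apply] at h
          rw [h, integral_sub I4 I5]
      _ = ∫ a, breg φ (η (X a)) (f (X a)) ∂μ := by rw [k1]; ring
  have hpos : 0 ≤ ∫ a, breg φ (η (X a)) (f (X a)) ∂μ :=
    integral_nonneg fun a => breg_nonneg hφ.convexOn hφd (hηΩ _) (hfΩ _)
  linarith [hsub, hpos]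
end
end
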